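/- arXiv:2506.00059 — 2 statements merged into one kernel-verified Lean document; each statement's English description precedes it below -/
import Mathlib

section
/- (Weak regularity for the parameter set.) Fix 0 < m ≤ 1/2, m ≤ M. For every ε > 0 there exists K_max(ε) ∈ ℕ such that for every triple p = (W, u₀, γ) of measurable functions with m ≤ W(x,y) = W(y,x) ≤ M, m ≤ u₀(x) ≤ 1−m, and 0 ≤ γ(x) ≤ M for a.e. x, y ∈ [0,1], there exist K ≤ K_max(ε) and a measurable partition I₁,…,I_K of [0,1] with positive-measure parts such that the step functions W', u₀', γ'—defined on I_k × I_l and I_k by the averages w'_{kl} := (1/(|I_k||I_l|)) ∫_{I_k}∫_{I_l} W(x,y) dx dy, u'_k := (1/|I_k|) ∫_{I_k} u₀(x) dx, γ'_k := (1/|I_k|) ∫_{I_k} γ(x) dx—satisfy ‖W − W'‖_□ + ‖u₀ − u₀'‖_{L¹} + ‖γ − γ'‖_{L¹} < ε. -/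
open MeasureTheory

/-- The cut norm of a bounded measurable kernel `V` on `[0,1]²`:
`‖V‖_□ = sup_{S,S' ⊆ [0,1]} |∫_S ∫_{S'} V(x,y) dx dy|`. -/
noncomputable def cutNorm (V : ℝ → ℝ → ℝ) : ℝ :=
  sSup {r : ℝ | ∃ S S' : Set ℝ, MeasurableSet S ∧ MeasurableSet S' ∧
    S ⊆ Set.Icc 0 1 ∧ S' ⊆ Set.Icc 0 1 ∧ r = |∫ x in S, ∫ y in S', V x y|}

open Set
open scoped Classical

namespace S16

def sq01 : Set (ℝ × ℝ) := (Icc (0:ℝ) 1) ×ˢ (Icc (0:ℝ) 1)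

lemma meas_sq01 : MeasurableSet sq01 := measurableSet_Icc.prod measurableSet_Icc

lemma vol_Icc01 : volume (Icc (0:ℝ) 1) = 1 := by simp [Real.volume_Icc]

lemma vol_prod (A B : Set ℝ) : (volume : Measure (ℝ×ℝ)) (A ×ˢ B) = volume A * volume B := by
  rw [Measure.volume_eq_prod, Measure.prod_prod]

lemma vol_sq01 : (volume : Measure (ℝ×ℝ)) sq01 = 1 := by
  rw [sq01, vol_prod, vol_Icc01, one_mul]

lemma restrict_prod (A B : Set ℝ) :
    (volume : Measure (ℝ×ℝ)).restrict (A ×ˢ B) = (volume.restrict A).prod (volume.restrict B) := by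
  rw [Measure.volume_eq_prod, Measure.prod_restrict]

lemma iter_eq {h : ℝ×ℝ→ℝ} {A B : Set ℝ} (hA : MeasurableSet A) (hB : MeasurableSet B)
    (hint : IntegrableOn h (A ×ˢ B) volume) :
    ∫ x in A, ∫ y in B, h (x, y) = ∫ q in A ×ˢ B, h q := by
  rw [show ((volume : Measure (ℝ×ℝ))) = (volume : Measure ℝ).prod volume from Measure.volume_eq_prod ..]
  rw [Measure.volume_eq_prod] at hint
  exact (setIntegral_prod h hint).symm

def IsPart (P : Finset (Set ℝ)) : Prop :=
  (∀ A ∈ P, MeasurableSet A) ∧ ((P : Set (Set ℝ)).Pairwise Disjoint) ∧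
    ⋃₀ ↑P = Icc (0:ℝ) 1

noncomputable def mA (A : Set ℝ) : ℝ := (volume A).toReal

lemma IsPart.subset {P} (hP : IsPart P) {A} (hA : A ∈ P) : A ⊆ Icc (0:ℝ) 1 := by
  rw [← hP.2.2]; exact subset_sUnion_of_mem hA

lemma IsPart.sUnion_biUnion (P : Finset (Set ℝ)) : ⋃₀ (↑P : Set (Set ℝ)) = ⋃ A ∈ P, A := by
  simp [Set.sUnion_eq_biUnion]

lemma vol_ne_top {A : Set ℝ} (hA : A ⊆ Icc (0:ℝ) 1) : volume A ≠ ⊤ := by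
  refine ne_top_of_le_ne_top ?_ (measure_mono hA)
  rw [S16.vol_Icc01]; exact ENNReal.one_ne_top

lemma mA_nonneg (A : Set ℝ) : 0 ≤ mA A := ENNReal.toReal_nonneg

lemma IsPart.sum_mA {P} (hP : IsPart P) : ∑ A ∈ P, mA A = 1 := by
  have h : ∑ A ∈ P, volume A = 1 := by
    rw [← measure_biUnion_finset hP.2.1 (fun A hA => hP.1 A hA)]
    rw [← IsPart.sUnion_biUnion, hP.2.2, S16.vol_Icc01]
  have : (∑ A ∈ P, volume A).toReal = ∑ A ∈ P, mA A := by
    rw [ENNReal.toReal_sum]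
    · rfl
    · exact fun A hA => vol_ne_top (hP.subset hA)
  rw [← this, h, ENNReal.toReal_one]

lemma IsPart.unique {P} (hP : IsPart P) {A B : Set ℝ} (hA : A ∈ P) (hB : B ∈ P)
    {x : ℝ} (hxA : x ∈ A) (hxB : x ∈ B) : A = B := by
  by_contra hne
  exact (hP.2.1 hA hB hne).le_bot ⟨hxA, hxB⟩ |>.elim
noncomputable def cInt (f : ℝ×ℝ→ℝ) (A B : Set ℝ) : ℝ := ∫ q in A ×ˢ B, f q

noncomputable def avgK (f : ℝ×ℝ→ℝ) (A B : Set ℝ) : ℝ := cInt f A B / (mA A * mA B)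

noncomputable def stepK (f : ℝ×ℝ→ℝ) (P : Finset (Set ℝ)) : ℝ×ℝ→ℝ := fun q =>
  ∑ A ∈ P, ∑ B ∈ P, A.indicator 1 q.1 * B.indicator 1 q.2 * avgK f A B

noncomputable def en (f : ℝ×ℝ→ℝ) (P : Finset (Set ℝ)) : ℝ :=
  ∑ A ∈ P, ∑ B ∈ P, (cInt f A B)^2 / (mA A * mA B)

def Refines (P' P : Finset (Set ℝ)) : Prop := ∀ A ∈ P', ∃ B ∈ P, A ⊆ B

section f
variable {f : ℝ×ℝ→ℝ} {M : ℝ}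

lemma restr_finite {T : Set (ℝ×ℝ)} (hT : T ⊆ sq01) :
    IsFiniteMeasure ((volume : Measure (ℝ×ℝ)).restrict T) := by
  constructor
  rw [Measure.restrict_apply_univ]
  calc volume T ≤ volume sq01 := measure_mono hT
  _ = 1 := vol_sq01
  _ < ⊤ := ENNReal.one_lt_top

lemma ae_sub {T : Set (ℝ×ℝ)} (hT : T ⊆ sq01) {p : ℝ×ℝ → Prop}
    (h : ∀ᵐ q ∂(volume : Measure (ℝ×ℝ)).restrict sq01, p q) :
    ∀ᵐ q ∂(volume : Measure (ℝ×ℝ)).restrict T, p q :=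
  ae_restrict_of_ae_restrict_of_subset hT h

lemma int_of_bdd {h : ℝ×ℝ→ℝ} (hm : Measurable h) {C : ℝ}
    (hb : ∀ᵐ q ∂(volume : Measure (ℝ×ℝ)).restrict sq01, |h q| ≤ C)
    {T : Set (ℝ×ℝ)} (hT : T ⊆ sq01) : IntegrableOn h T volume := by
  haveI := restr_finite hT
  refine Integrable.mono' (integrable_const C) hm.aestronglyMeasurable ?_
  simpa [Real.norm_eq_abs] using ae_sub hT hb

lemma hf_int (hfm : Measurable f)
    (hfb : ∀ᵐ q ∂(volume : Measure (ℝ×ℝ)).restrict sq01, |f q| ≤ M)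
    {A B : Set ℝ} (hA : A ⊆ Icc (0:ℝ) 1) (hB : B ⊆ Icc (0:ℝ) 1) :
    IntegrableOn f (A ×ˢ B) volume :=
  int_of_bdd hfm hfb (Set.prod_mono hA hB)

lemma vol_ne_top2 {T : Set (ℝ×ℝ)} (hT : T ⊆ sq01) : volume T ≠ ⊤ := by
  refine ne_top_of_le_ne_top ?_ (measure_mono hT)
  rw [vol_sq01]; exact ENNReal.one_ne_top

lemma cInt_null {A B : Set ℝ} (h : volume A * volume B = 0) : cInt f A B = 0 := by
  have : (volume : Measure (ℝ×ℝ)).restrict (A ×ˢ B) = 0 := by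
    rw [Measure.restrict_eq_zero, vol_prod, h]
  rw [cInt, this, integral_zero_measure]

lemma mA_mul_eq (A B : Set ℝ) (hA : A ⊆ Icc (0:ℝ) 1) (hB : B ⊆ Icc (0:ℝ) 1) :
    (volume (A ×ˢ B)).toReal = mA A * mA B := by
  rw [vol_prod, ENNReal.toReal_mul]; rfl

lemma cInt_abs_le (hM : 0 ≤ M) (hfm : Measurable f)
    (hfb : ∀ᵐ q ∂(volume : Measure (ℝ×ℝ)).restrict sq01, |f q| ≤ M)
    {A B : Set ℝ} (hA : A ⊆ Icc (0:ℝ) 1) (hB : B ⊆ Icc (0:ℝ) 1) :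
    |cInt f A B| ≤ M * (mA A * mA B) := by
  have h1 : |cInt f A B| ≤ ∫ q in A ×ˢ B, |f q| := by
    simpa [Real.norm_eq_abs, cInt] using
      norm_integral_le_integral_norm (μ := (volume : Measure (ℝ×ℝ)).restrict (A ×ˢ B)) f
  have h2 : ∫ q in A ×ˢ B, |f q| ≤ ∫ _q in A ×ˢ B, M := by
    refine integral_mono_ae ((hf_int hfm hfb hA hB).abs) (integrableOn_const ?_) ?_
    · exact vol_ne_top2 (Set.prod_mono hA hB)
    · exact ae_sub (Set.prod_mono hA hB) hfb
  have h3 : ∫ _q in A ×ˢ B, M = M * (mA A * mA B) := by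
    rw [setIntegral_const, measureReal_def, mA_mul_eq A B hA hB, smul_eq_mul, mul_comm]
  linarith

end f
section f
variable {f : ℝ×ℝ→ℝ} {M : ℝ}

lemma stepK_meas {P : Finset (Set ℝ)} (hP : ∀ A ∈ P, MeasurableSet A) :
    Measurable (stepK f P) := by
  apply Finset.measurable_sum
  intro A hA
  apply Finset.measurable_sum
  intro B hB
  exact (((measurable_const.indicator (hP A hA)).comp measurable_fst).mul
    ((measurable_const.indicator (hP B hB)).comp measurable_snd)).mul measurable_const

lemma abs_indicator_le (A : Set ℝ) (x : ℝ) : |A.indicator (1 : ℝ → ℝ) x| ≤ 1 := by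
  rw [Set.indicator]; split <;> simp

lemma stepK_bdd {P : Finset (Set ℝ)} (q : ℝ×ℝ) :
    |stepK f P q| ≤ ∑ A ∈ P, ∑ B ∈ P, |avgK f A B| := by
  refine (Finset.abs_sum_le_sum_abs _ _).trans ?_
  refine Finset.sum_le_sum fun A _ => ?_
  refine (Finset.abs_sum_le_sum_abs _ _).trans ?_
  refine Finset.sum_le_sum fun B _ => ?_
  rw [abs_mul, abs_mul]
  have h1 := abs_indicator_le A q.1
  have h2 := abs_indicator_le B q.2
  have h3 := abs_nonneg (avgK f A B)
  have h4 := abs_nonneg (A.indicator (1 : ℝ → ℝ) q.1)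
  have h5 := abs_nonneg (B.indicator (1 : ℝ → ℝ) q.2)
  calc |A.indicator 1 q.1| * |B.indicator 1 q.2| * |avgK f A B|
      ≤ 1 * 1 * |avgK f A B| := by
        exact mul_le_mul (mul_le_mul h1 h2 h5 zero_le_one) le_rfl h3 (by norm_num)
  _ = |avgK f A B| := by ring

lemma stepK_int {P : Finset (Set ℝ)} (hP : ∀ A ∈ P, MeasurableSet A)
    {T : Set (ℝ×ℝ)} (hT : T ⊆ sq01) : IntegrableOn (stepK f P) T volume :=
  int_of_bdd (stepK_meas hP) (Filter.Eventually.of_forall fun q => stepK_bdd q) hT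

lemma stepK_collapse {P} (hP : IsPart P) {A B} (hA : A ∈ P) (hB : B ∈ P) {x y : ℝ}
    (hx : x ∈ A) (hy : y ∈ B) : stepK f P (x, y) = avgK f A B := by
  rw [stepK]
  rw [Finset.sum_eq_single A]
  · rw [Finset.sum_eq_single B]
    · simp [Set.indicator_of_mem hx, Set.indicator_of_mem hy]
    · intro B' hB' hne
      have hy' : y ∉ B' := fun hyB' => (hP.2.1 hB' hB hne).le_bot ⟨hyB', hy⟩
      simp [Set.indicator_of_notMem hy']
    · exact fun h => absurd hB h
  · intro A' hA' hne
    have hx' : x ∉ A' := fun hxA' => (hP.2.1 hA' hA hne).le_bot ⟨hxA', hx⟩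
    simp [Set.indicator_of_notMem hx']
  · exact fun h => absurd hA h

lemma prod_sUnion (Q₁ Q₂ : Finset (Set ℝ)) :
    ((⋃₀ ↑Q₁ : Set ℝ) ×ˢ (⋃₀ ↑Q₂ : Set ℝ)) = ⋃ p ∈ Q₁ ×ˢ Q₂, ((p : Set ℝ × Set ℝ).1 ×ˢ p.2) := by
  ext q
  simp only [Set.mem_prod, Set.mem_sUnion, Set.mem_iUnion, Finset.mem_coe, Finset.mem_product]
  constructor
  · rintro ⟨⟨A, hA, hqA⟩, ⟨B, hB, hqB⟩⟩
    exact ⟨(A, B), ⟨hA, hB⟩, hqA, hqB⟩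
  · rintro ⟨⟨A, B⟩, ⟨hA, hB⟩, hqA, hqB⟩
    exact ⟨⟨A, hA, hqA⟩, ⟨B, hB, hqB⟩⟩

lemma rect_sum {h : ℝ×ℝ→ℝ} (hint : IntegrableOn h sq01 volume)
    {Q₁ Q₂ : Finset (Set ℝ)}
    (hm₁ : ∀ A ∈ Q₁, MeasurableSet A) (hm₂ : ∀ A ∈ Q₂, MeasurableSet A)
    (hs₁ : ∀ A ∈ Q₁, A ⊆ Icc (0:ℝ) 1) (hs₂ : ∀ A ∈ Q₂, A ⊆ Icc (0:ℝ) 1)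
    (hd₁ : (Q₁ : Set (Set ℝ)).Pairwise Disjoint) (hd₂ : (Q₂ : Set (Set ℝ)).Pairwise Disjoint) :
    ∫ q in ((⋃₀ ↑Q₁ : Set ℝ) ×ˢ (⋃₀ ↑Q₂ : Set ℝ)), h q
      = ∑ A ∈ Q₁, ∑ B ∈ Q₂, ∫ q in A ×ˢ B, h q := by
  rw [prod_sUnion]
  rw [integral_biUnion_finset (Q₁ ×ˢ Q₂)
    (fun p hp => ((hm₁ _ (Finset.mem_product.mp hp).1).prod (hm₂ _ (Finset.mem_product.mp hp).2)))
    ?disj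
    (fun p hp => hint.mono_set (Set.prod_mono (hs₁ _ (Finset.mem_product.mp hp).1)
      (hs₂ _ (Finset.mem_product.mp hp).2)))]
  · rw [Finset.sum_product]
  case disj =>
    intro p hp p' hp' hne
    rw [Function.onFun]
    rw [Finset.mem_coe, Finset.mem_product] at hp hp'
    rw [Set.disjoint_prod]
    by_cases h1 : p.1 = p'.1
    · have h2 : p.2 ≠ p'.2 := fun h2 => hne (Prod.ext h1 h2)
      exact Or.inr (hd₂ hp.2 hp'.2 h2)
    · exact Or.inl (hd₁ hp.1 hp'.1 h1)
end f
section f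
variable {f : ℝ×ℝ→ℝ} {M : ℝ}

lemma hf_int_sq (hfm : Measurable f)
    (hfb : ∀ᵐ q ∂(volume : Measure (ℝ×ℝ)).restrict sq01, |f q| ≤ M) :
    IntegrableOn f sq01 volume := int_of_bdd hfm hfb subset_rfl

lemma mA_mul_zero {A B : Set ℝ} (hA : A ⊆ Icc (0:ℝ) 1) (hB : B ⊆ Icc (0:ℝ) 1)
    (h : mA A * mA B = 0) : volume A * volume B = 0 := by
  rcases mul_eq_zero.mp h with h | h
  · have : volume A = 0 := by
      have := (ENNReal.toReal_eq_zero_iff _).mp h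
      rcases this with h' | h'
      exacts [h', absurd h' (vol_ne_top hA)]
    rw [this, zero_mul]
  · have : volume B = 0 := by
      rcases (ENNReal.toReal_eq_zero_iff _).mp h with h' | h'
      exacts [h', absurd h' (vol_ne_top hB)]
    rw [this, mul_zero]

lemma F1 {P} (hP : IsPart P) {A B} (hA : A ∈ P) (hB : B ∈ P) :
    ∫ q in A ×ˢ B, stepK f P q = cInt f A B := by
  have hmeas : MeasurableSet (A ×ˢ B) := (hP.1 A hA).prod (hP.1 B hB)
  have hconst : ∫ q in A ×ˢ B, stepK f P q = ∫ _q in A ×ˢ B, avgK f A B := by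
    refine setIntegral_congr_fun hmeas fun q hq => ?_
    have := stepK_collapse (f := f) hP hA hB hq.1 hq.2
    simpa using this
  rw [hconst, setIntegral_const, measureReal_def, mA_mul_eq A B (hP.subset hA) (hP.subset hB), smul_eq_mul]
  by_cases h0 : mA A * mA B = 0
  · rw [h0, zero_mul, cInt_null (mA_mul_zero (hP.subset hA) (hP.subset hB) h0)]
  · rw [avgK, mul_div_cancel₀ _ h0]

lemma subparts_sUnion {P' P : Finset (Set ℝ)} (hP' : IsPart P') (hP : IsPart P)
    (href : Refines P' P) {A} (hA : A ∈ P) : ⋃₀ ↑(P'.filter (· ⊆ A)) = A := by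
  apply Set.Subset.antisymm
  · rintro x ⟨A', hA', hxA'⟩
    rw [Finset.mem_coe, Finset.mem_filter] at hA'
    exact hA'.2 hxA'
  · intro x hxA
    have hx01 : x ∈ Icc (0:ℝ) 1 := hP.subset hA hxA
    rw [← hP'.2.2] at hx01
    rcases hx01 with ⟨A', hA', hxA'⟩
    rw [Finset.mem_coe] at hA'
    rcases href A' hA' with ⟨B, hB, hsub⟩
    have hBA : B = A := hP.unique hB hA (hsub hxA') hxA
    exact ⟨A', Finset.mem_coe.mpr (Finset.mem_filter.mpr ⟨hA', hBA ▸ hsub⟩), hxA'⟩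

lemma rect_sum' {h : ℝ×ℝ→ℝ} (hint : IntegrableOn h sq01 volume)
    {P' : Finset (Set ℝ)} (hP' : IsPart P') {Q₁ Q₂ : Finset (Set ℝ)}
    (h₁ : Q₁ ⊆ P') (h₂ : Q₂ ⊆ P') :
    ∫ q in ((⋃₀ ↑Q₁ : Set ℝ) ×ˢ (⋃₀ ↑Q₂ : Set ℝ)), h q
      = ∑ A ∈ Q₁, ∑ B ∈ Q₂, ∫ q in A ×ˢ B, h q :=
  rect_sum hint (fun A hA => hP'.1 A (h₁ hA)) (fun A hA => hP'.1 A (h₂ hA))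
    (fun A hA => hP'.subset (h₁ hA)) (fun A hA => hP'.subset (h₂ hA))
    (hP'.2.1.mono (by exact_mod_cast Finset.coe_subset.mpr h₁))
    (hP'.2.1.mono (by exact_mod_cast Finset.coe_subset.mpr h₂))

lemma F3 (hfm : Measurable f)
    (hfb : ∀ᵐ q ∂(volume : Measure (ℝ×ℝ)).restrict sq01, |f q| ≤ M)
    {P' : Finset (Set ℝ)} (hP' : IsPart P') {Q₁ Q₂ : Finset (Set ℝ)}
    (h₁ : Q₁ ⊆ P') (h₂ : Q₂ ⊆ P') :
    ∫ q in ((⋃₀ ↑Q₁ : Set ℝ) ×ˢ (⋃₀ ↑Q₂ : Set ℝ)), f q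
      = ∫ q in ((⋃₀ ↑Q₁ : Set ℝ) ×ˢ (⋃₀ ↑Q₂ : Set ℝ)), stepK f P' q := by
  rw [rect_sum' (hf_int_sq hfm hfb) hP' h₁ h₂, rect_sum' (stepK_int hP'.1 subset_rfl) hP' h₁ h₂]
  refine Finset.sum_congr rfl fun A hA => Finset.sum_congr rfl fun B hB => ?_
  rw [F1 hP' (h₁ hA) (h₂ hB)]
  rfl

lemma F2 (hfm : Measurable f)
    (hfb : ∀ᵐ q ∂(volume : Measure (ℝ×ℝ)).restrict sq01, |f q| ≤ M)
    {P' P : Finset (Set ℝ)} (hP' : IsPart P') (hP : IsPart P) (href : Refines P' P)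
    {A B} (hA : A ∈ P) (hB : B ∈ P) :
    ∫ q in A ×ˢ B, stepK f P' q = cInt f A B := by
  have hUA := subparts_sUnion hP' hP href hA
  have hUB := subparts_sUnion hP' hP href hB
  have h := F3 hfm hfb hP' (Finset.filter_subset (· ⊆ A) P') (Finset.filter_subset (· ⊆ B) P')
  rw [hUA, hUB] at h
  rw [← h]
  rfl
end f
section f
variable {f : ℝ×ℝ→ℝ} {M : ℝ}

lemma step_mul_int {P₁ P₂ : Finset (Set ℝ)} (h₁ : ∀ A ∈ P₁, MeasurableSet A)
    (h₂ : ∀ A ∈ P₂, MeasurableSet A) {T : Set (ℝ×ℝ)} (hT : T ⊆ sq01) :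
    IntegrableOn (fun q => stepK f P₁ q * stepK f P₂ q) T volume := by
  refine int_of_bdd ((stepK_meas h₁).mul (stepK_meas h₂))
    (C := (∑ A ∈ P₁, ∑ B ∈ P₁, |avgK f A B|) * (∑ A ∈ P₂, ∑ B ∈ P₂, |avgK f A B|))
    (Filter.Eventually.of_forall fun q => ?_) hT
  rw [Pi.mul_apply, abs_mul]
  exact mul_le_mul (stepK_bdd q) (stepK_bdd q) (abs_nonneg _)
    (Finset.sum_nonneg fun A _ => Finset.sum_nonneg fun B _ => abs_nonneg _)

lemma sq01_eq {P : Finset (Set ℝ)} (hP : IsPart P) :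
    sq01 = ((⋃₀ ↑P : Set ℝ) ×ˢ (⋃₀ ↑P : Set ℝ)) := by rw [hP.2.2]; rfl

lemma F4 (hfm : Measurable f)
    (hfb : ∀ᵐ q ∂(volume : Measure (ℝ×ℝ)).restrict sq01, |f q| ≤ M)
    {P' P : Finset (Set ℝ)} (hP' : IsPart P') (hP : IsPart P) (href : Refines P' P) :
    ∫ q in sq01, (stepK f P' q * stepK f P q) = en f P := by
  rw [sq01_eq hP]
  rw [rect_sum (step_mul_int hP'.1 hP.1 subset_rfl) hP.1 hP.1
    (fun A hA => hP.subset hA) (fun A hA => hP.subset hA) hP.2.1 hP.2.1]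
  refine Finset.sum_congr rfl fun A hA => Finset.sum_congr rfl fun B hB => ?_
  have hconst : ∫ q in A ×ˢ B, stepK f P' q * stepK f P q
      = ∫ q in A ×ˢ B, stepK f P' q * avgK f A B := by
    refine setIntegral_congr_fun ((hP.1 A hA).prod (hP.1 B hB)) fun q hq => ?_
    have h2 : stepK f P q = avgK f A B := by
      simpa using stepK_collapse (f := f) hP hA hB hq.1 hq.2
    rw [h2]
  rw [hconst, integral_mul_const, F2 hfm hfb hP' hP href hA hB, avgK]
  rw [mul_div_assoc', ← pow_two]

lemma en_eq_int (hfm : Measurable f)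
    (hfb : ∀ᵐ q ∂(volume : Measure (ℝ×ℝ)).restrict sq01, |f q| ≤ M)
    {P : Finset (Set ℝ)} (hP : IsPart P) :
    ∫ q in sq01, (stepK f P q)^2 = en f P := by
  have := F4 hfm hfb hP hP (fun A hA => ⟨A, hA, subset_rfl⟩)
  rw [← this]
  refine setIntegral_congr_fun meas_sq01 fun q _ => ?_
  rw [pow_two]

lemma enD (hfm : Measurable f)
    (hfb : ∀ᵐ q ∂(volume : Measure (ℝ×ℝ)).restrict sq01, |f q| ≤ M)
    {P' P : Finset (Set ℝ)} (hP' : IsPart P') (hP : IsPart P) (href : Refines P' P) :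
    ∫ q in sq01, (stepK f P' q - stepK f P q)^2 = en f P' - en f P := by
  have i11 : IntegrableOn (fun q => stepK f P' q * stepK f P' q) sq01 volume :=
    step_mul_int hP'.1 hP'.1 subset_rfl
  have i12 : IntegrableOn (fun q => stepK f P' q * stepK f P q) sq01 volume :=
    step_mul_int hP'.1 hP.1 subset_rfl
  have i22 : IntegrableOn (fun q => stepK f P q * stepK f P q) sq01 volume :=
    step_mul_int hP.1 hP.1 subset_rfl
  have hpt : ∀ q : ℝ×ℝ, (stepK f P' q - stepK f P q)^2
      = stepK f P' q * stepK f P' q - 2 * (stepK f P' q * stepK f P q)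
        + stepK f P q * stepK f P q := fun q => by ring
  have hcongr : ∫ q in sq01, (stepK f P' q - stepK f P q)^2
      = ∫ q in sq01, (stepK f P' q * stepK f P' q - 2 * (stepK f P' q * stepK f P q)
        + stepK f P q * stepK f P q) := setIntegral_congr_fun meas_sq01 fun q _ => hpt q
  have isub : Integrable (fun q => stepK f P' q * stepK f P' q
      - 2 * (stepK f P' q * stepK f P q)) ((volume : Measure (ℝ×ℝ)).restrict sq01) :=
    i11.sub (i12.const_mul 2)
  have i2 : Integrable (fun q => 2 * (stepK f P' q * stepK f P q))
      ((volume : Measure (ℝ×ℝ)).restrict sq01) := i12.const_mul 2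
  rw [hcongr, integral_add isub i22, integral_sub i11 i2, MeasureTheory.integral_const_mul]
  have e1 : ∫ q in sq01, stepK f P' q * stepK f P' q = en f P' := by
    have := en_eq_int hfm hfb hP'
    rw [← this]
    refine setIntegral_congr_fun meas_sq01 fun q _ => ?_
    rw [pow_two]
  have e2 := F4 hfm hfb hP' hP href
  have e3 : ∫ q in sq01, stepK f P q * stepK f P q = en f P := by
    have := en_eq_int hfm hfb hP
    rw [← this]
    refine setIntegral_congr_fun meas_sq01 fun q _ => ?_
    rw [pow_two]
  rw [e1, e2, e3]
  ring
end f
section f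
variable {f : ℝ×ℝ→ℝ} {M : ℝ}

lemma en_nonneg (P : Finset (Set ℝ)) : 0 ≤ en f P :=
  Finset.sum_nonneg fun A _ => Finset.sum_nonneg fun B _ =>
    div_nonneg (sq_nonneg _) (mul_nonneg (mA_nonneg A) (mA_nonneg B))

lemma en_le (hM : 0 ≤ M) (hfm : Measurable f)
    (hfb : ∀ᵐ q ∂(volume : Measure (ℝ×ℝ)).restrict sq01, |f q| ≤ M)
    {P : Finset (Set ℝ)} (hP : IsPart P) : en f P ≤ M^2 := by
  have hterm : ∀ A ∈ P, ∀ B ∈ P, (cInt f A B)^2 / (mA A * mA B) ≤ M^2 * (mA A * mA B) := by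
    intro A hA B hB
    by_cases h0 : mA A * mA B = 0
    · rw [h0, div_zero, mul_zero]
    · have hpos : 0 < mA A * mA B :=
        lt_of_le_of_ne (mul_nonneg (mA_nonneg A) (mA_nonneg B)) (Ne.symm h0)
      rw [div_le_iff₀ hpos]
      have habs := cInt_abs_le hM hfm hfb (hP.subset hA) (hP.subset hB)
      calc (cInt f A B)^2 = |cInt f A B|^2 := (sq_abs _).symm
        _ ≤ (M * (mA A * mA B))^2 := by
            exact pow_le_pow_left₀ (abs_nonneg _) habs 2
        _ = M^2 * (mA A * mA B) * (mA A * mA B) := by ring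
  calc en f P ≤ ∑ A ∈ P, ∑ B ∈ P, M^2 * (mA A * mA B) :=
        Finset.sum_le_sum fun A hA => Finset.sum_le_sum fun B hB => hterm A hA B hB
    _ = M^2 * ((∑ A ∈ P, mA A) * (∑ B ∈ P, mA B)) := by
        rw [Finset.sum_mul_sum, Finset.mul_sum]
        refine Finset.sum_congr rfl fun A _ => ?_
        rw [Finset.mul_sum]
    _ = M^2 := by rw [hP.sum_mA, one_mul, mul_one]

lemma L1_le_L2 {D : ℝ×ℝ→ℝ} (hm : Measurable D) (C : ℝ) (hb : ∀ q, |D q| ≤ C) :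
    (∫ q in sq01, |D q|) ≤ Real.sqrt (∫ q in sq01, (D q)^2) := by
  set μ := (volume : Measure (ℝ×ℝ)).restrict sq01 with hμ
  haveI : IsFiniteMeasure μ := restr_finite subset_rfl
  have hconj : Real.HolderConjugate 2 2 := by constructor <;> norm_num
  have hmem : MemLp (fun q => |D q|) (ENNReal.ofReal 2) μ :=
    MemLp.of_bound hm.abs.aestronglyMeasurable C
      (Filter.Eventually.of_forall (by simpa [Real.norm_eq_abs, abs_abs] using hb))
  have hone : MemLp (fun _ : ℝ×ℝ => (1:ℝ)) (ENNReal.ofReal 2) μ := memLp_const 1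
  have key := integral_mul_le_Lp_mul_Lq_of_nonneg hconj (μ := μ)
    (Filter.Eventually.of_forall fun q => abs_nonneg (D q))
    (Filter.Eventually.of_forall fun _ => zero_le_one) hmem hone
  simp only [mul_one] at key
  have h1 : ∫ a, (1:ℝ) ^ (2:ℝ) ∂μ = 1 := by
    simp only [Real.one_rpow, integral_const, smul_eq_mul, mul_one]
    rw [hμ, measureReal_def, Measure.restrict_apply_univ, vol_sq01, ENNReal.toReal_one]
  have h2 : ∀ a : ℝ×ℝ, |D a| ^ (2:ℝ) = (D a)^2 := fun a => by
    rw [show ((2:ℝ)) = ((2:ℕ):ℝ) by norm_num, Real.rpow_natCast, sq_abs]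
  rw [h1] at key
  simp only [h2] at key
  rw [Real.one_rpow, mul_one] at key
  calc (∫ q in sq01, |D q|) ≤ (∫ a, (D a)^2 ∂μ) ^ (1/(2:ℝ)) := key
    _ = Real.sqrt (∫ q in sq01, (D q)^2) := by
        rw [Real.sqrt_eq_rpow]

end f
section f
variable {f : ℝ×ℝ→ℝ} {M : ℝ}

lemma sUnion_subset_Icc {P : Finset (Set ℝ)} (hP : IsPart P) {Q : Finset (Set ℝ)}
    (hQ : Q ⊆ P) : (⋃₀ ↑Q : Set ℝ) ⊆ Icc (0:ℝ) 1 := by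
  rintro x ⟨A, hA, hxA⟩
  exact hP.subset (hQ (Finset.mem_coe.mp hA)) hxA

lemma increment (hfm : Measurable f)
    (hfb : ∀ᵐ q ∂(volume : Measure (ℝ×ℝ)).restrict sq01, |f q| ≤ M)
    {P P₂ : Finset (Set ℝ)} (hP : IsPart P) (hP₂ : IsPart P₂) (href : Refines P₂ P)
    {Q₁ Q₂ : Finset (Set ℝ)} (h₁ : Q₁ ⊆ P₂) (h₂ : Q₂ ⊆ P₂) :
    (∫ q in ((⋃₀ ↑Q₁ : Set ℝ) ×ˢ (⋃₀ ↑Q₂ : Set ℝ)), (f q - stepK f P q))^2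
      ≤ en f P₂ - en f P := by
  set T : Set (ℝ×ℝ) := (⋃₀ ↑Q₁ : Set ℝ) ×ˢ (⋃₀ ↑Q₂ : Set ℝ) with hT
  have hTsub : T ⊆ sq01 := Set.prod_mono (sUnion_subset_Icc hP₂ h₁) (sUnion_subset_Icc hP₂ h₂)
  set D : ℝ×ℝ → ℝ := fun q => stepK f P₂ q - stepK f P q with hD
  have hDm : Measurable D := (stepK_meas hP₂.1).sub (stepK_meas hP.1)
  set C : ℝ := (∑ A ∈ P₂, ∑ B ∈ P₂, |avgK f A B|) + (∑ A ∈ P, ∑ B ∈ P, |avgK f A B|) with hC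
  have hDb : ∀ q, |D q| ≤ C := fun q =>
    (abs_sub (stepK f P₂ q) (stepK f P q)).trans (add_le_add (stepK_bdd q) (stepK_bdd q))
  have hfT : IntegrableOn f T volume := int_of_bdd hfm hfb hTsub
  have hsPT : IntegrableOn (stepK f P) T volume := stepK_int hP.1 hTsub
  have hsP₂T : IntegrableOn (stepK f P₂) T volume := stepK_int hP₂.1 hTsub
  have e0 : ∫ q in T, (f q - stepK f P q) = ∫ q in T, D q := by
    rw [integral_sub hfT hsPT, integral_sub hsP₂T hsPT]
    congr 1
    exact F3 hfm hfb hP₂ h₁ h₂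
  have e1 : |∫ q in T, D q| ≤ ∫ q in sq01, |D q| := by
    have a1 : |∫ q in T, D q| ≤ ∫ q in T, |D q| := by
      simpa [Real.norm_eq_abs] using
        norm_integral_le_integral_norm (μ := (volume : Measure (ℝ×ℝ)).restrict T) D
    have a2 : ∫ q in T, |D q| ≤ ∫ q in sq01, |D q| := by
      refine setIntegral_mono_set (int_of_bdd hDm.abs
        (Filter.Eventually.of_forall fun q => by simpa [abs_abs] using hDb q) subset_rfl)
        (Filter.Eventually.of_forall fun q => abs_nonneg (D q))
        (HasSubset.Subset.eventuallyLE hTsub)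
    linarith
  have e2 : ∫ q in sq01, |D q| ≤ Real.sqrt (∫ q in sq01, (D q)^2) := L1_le_L2 hDm C hDb
  have e3 : ∫ q in sq01, (D q)^2 = en f P₂ - en f P := enD hfm hfb hP₂ hP href
  have e4 : 0 ≤ en f P₂ - en f P := by
    rw [← e3]
    exact setIntegral_nonneg meas_sq01 fun q _ => sq_nonneg _
  rw [e0]
  calc (∫ q in T, D q)^2 = |∫ q in T, D q|^2 := (sq_abs _).symm
    _ ≤ (Real.sqrt (en f P₂ - en f P))^2 := by
        refine pow_le_pow_left₀ (abs_nonneg _) ?_ 2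
        calc |∫ q in T, D q| ≤ ∫ q in sq01, |D q| := e1
          _ ≤ Real.sqrt (∫ q in sq01, (D q)^2) := e2
          _ = Real.sqrt (en f P₂ - en f P) := by rw [e3]
    _ = en f P₂ - en f P := Real.sq_sqrt e4

end f
def cell (S S' : Set ℝ) : Bool × Bool → Set ℝ := fun bb =>
  (cond bb.1 S Sᶜ) ∩ (cond bb.2 S' S'ᶜ)

lemma cell_disj {S S' : Set ℝ} {bb dd : Bool × Bool} (h : bb ≠ dd) :
    Disjoint (cell S S' bb) (cell S S' dd) := by
  have : bb.1 ≠ dd.1 ∨ bb.2 ≠ dd.2 := by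
    by_contra hc
    push_neg at hc
    exact h (Prod.ext hc.1 hc.2)
  rcases bb with ⟨b1, b2⟩
  rcases dd with ⟨d1, d2⟩
  rcases this with h1 | h1
  · refine Disjoint.mono inter_subset_left inter_subset_left ?_
    simp only at h1
    cases b1 <;> cases d1 <;> simp_all [disjoint_compl_left, disjoint_compl_right]
  · refine Disjoint.mono inter_subset_right inter_subset_right ?_
    simp only at h1
    cases b2 <;> cases d2 <;> simp_all [disjoint_compl_left, disjoint_compl_right]

lemma cell_univ (S S' : Set ℝ) (x : ℝ) : ∃ bb, x ∈ cell S S' bb := by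
  by_cases hx : x ∈ S <;> by_cases hx' : x ∈ S'
  · exact ⟨(true, true), hx, hx'⟩
  · exact ⟨(true, false), hx, hx'⟩
  · exact ⟨(false, true), hx, hx'⟩
  · exact ⟨(false, false), hx, hx'⟩

noncomputable def refineBy (P : Finset (Set ℝ)) (S S' : Set ℝ) : Finset (Set ℝ) :=
  (P ×ˢ (Finset.univ : Finset (Bool × Bool))).image (fun p => p.1 ∩ cell S S' p.2)

lemma refineBy_card (P : Finset (Set ℝ)) (S S' : Set ℝ) :
    (refineBy P S S').card ≤ 4 * P.card := by
  calc (refineBy P S S').card ≤ (P ×ˢ (Finset.univ : Finset (Bool × Bool))).card :=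
      Finset.card_image_le
    _ = P.card * 4 := by rw [Finset.card_product]; rfl
    _ = 4 * P.card := mul_comm _ _

lemma refineBy_mem {P : Finset (Set ℝ)} {S S' : Set ℝ} {X : Set ℝ} :
    X ∈ refineBy P S S' ↔ ∃ A ∈ P, ∃ bb, X = A ∩ cell S S' bb := by
  constructor
  · intro h
    rw [refineBy, Finset.mem_image] at h
    rcases h with ⟨p, hp, hX⟩
    rw [Finset.mem_product] at hp
    exact ⟨p.1, hp.1, p.2, hX.symm⟩
  · rintro ⟨A, hA, bb, rfl⟩
    rw [refineBy, Finset.mem_image]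
    exact ⟨(A, bb), Finset.mem_product.mpr ⟨hA, Finset.mem_univ _⟩, rfl⟩

lemma refineBy_refines (P : Finset (Set ℝ)) (S S' : Set ℝ) : Refines (refineBy P S S') P := by
  intro X hX
  rcases refineBy_mem.mp hX with ⟨A, hA, bb, rfl⟩
  exact ⟨A, hA, inter_subset_left⟩

lemma refineBy_isPart {P : Finset (Set ℝ)} (hP : IsPart P) {S S' : Set ℝ}
    (hS : MeasurableSet S) (hS' : MeasurableSet S') : IsPart (refineBy P S S') := by
  refine ⟨?_, ?_, ?_⟩
  · intro X hX
    rcases refineBy_mem.mp hX with ⟨A, hA, bb, rfl⟩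
    refine (hP.1 A hA).inter ?_
    refine MeasurableSet.inter ?_ ?_
    · cases bb.1 <;> [exact hS.compl; exact hS]
    · cases bb.2 <;> [exact hS'.compl; exact hS']
  · intro X hX Y hY hne
    rcases refineBy_mem.mp (Finset.mem_coe.mp hX) with ⟨A, hA, bb, rfl⟩
    rcases refineBy_mem.mp (Finset.mem_coe.mp hY) with ⟨B, hB, dd, rfl⟩
    by_cases hbd : bb = dd
    · subst hbd
      have hAB : A ≠ B := fun h => hne (by rw [h])
      exact (hP.2.1 hA hB hAB).mono inter_subset_left inter_subset_left
    · exact (cell_disj hbd).mono inter_subset_right inter_subset_right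
  · apply Set.Subset.antisymm
    · rintro x ⟨X, hX, hxX⟩
      rcases refineBy_mem.mp (Finset.mem_coe.mp hX) with ⟨A, hA, bb, rfl⟩
      exact hP.subset hA hxX.1
    · intro x hx
      rw [← hP.2.2] at hx
      rcases hx with ⟨A, hA, hxA⟩
      rcases cell_univ S S' x with ⟨bb, hbb⟩
      exact ⟨A ∩ cell S S' bb,
        Finset.mem_coe.mpr (refineBy_mem.mpr ⟨A, Finset.mem_coe.mp hA, bb, rfl⟩), hxA, hbb⟩

noncomputable def partsIn (P : Finset (Set ℝ)) (S S' : Set ℝ) (fst : Bool) : Finset (Set ℝ) :=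
  (P ×ˢ (Finset.univ : Finset (Bool × Bool)).filter (fun bb => (cond fst bb.1 bb.2) = true)).image
    (fun p => p.1 ∩ cell S S' p.2)

lemma partsIn_subset (P : Finset (Set ℝ)) (S S' : Set ℝ) (fst : Bool) :
    partsIn P S S' fst ⊆ refineBy P S S' := by
  apply Finset.image_subset_image
  apply Finset.product_subset_product_right
  exact Finset.filter_subset _ _

lemma partsIn_sUnion_fst {P : Finset (Set ℝ)} (hP : IsPart P) {S S' : Set ℝ}
    (hS : S ⊆ Icc (0:ℝ) 1) : (⋃₀ ↑(partsIn P S S' true) : Set ℝ) = S := by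
  apply Set.Subset.antisymm
  · rintro x ⟨X, hX, hxX⟩
    rw [Finset.mem_coe, partsIn, Finset.mem_image] at hX
    rcases hX with ⟨⟨A, bb⟩, hp, rfl⟩
    rw [Finset.mem_product, Finset.mem_filter] at hp
    have hb : bb.1 = true := hp.2.2
    have := hxX.2.1
    rwa [hb] at this
  · intro x hxS
    have hx : x ∈ Icc (0:ℝ) 1 := hS hxS
    rw [← hP.2.2] at hx
    rcases hx with ⟨A, hA, hxA⟩
    by_cases hx' : x ∈ S'
    · refine ⟨A ∩ cell S S' (true, true), ?_, hxA, hxS, hx'⟩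
      rw [Finset.mem_coe, partsIn, Finset.mem_image]
      exact ⟨(A, (true, true)), by
        rw [Finset.mem_product, Finset.mem_filter]
        exact ⟨Finset.mem_coe.mp hA, Finset.mem_univ _, rfl⟩, rfl⟩
    · refine ⟨A ∩ cell S S' (true, false), ?_, hxA, hxS, hx'⟩
      rw [Finset.mem_coe, partsIn, Finset.mem_image]
      exact ⟨(A, (true, false)), by
        rw [Finset.mem_product, Finset.mem_filter]
        exact ⟨Finset.mem_coe.mp hA, Finset.mem_univ _, rfl⟩, rfl⟩

lemma partsIn_sUnion_snd {P : Finset (Set ℝ)} (hP : IsPart P) {S S' : Set ℝ}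
    (hS' : S' ⊆ Icc (0:ℝ) 1) : (⋃₀ ↑(partsIn P S S' false) : Set ℝ) = S' := by
  apply Set.Subset.antisymm
  · rintro x ⟨X, hX, hxX⟩
    rw [Finset.mem_coe, partsIn, Finset.mem_image] at hX
    rcases hX with ⟨⟨A, bb⟩, hp, rfl⟩
    rw [Finset.mem_product, Finset.mem_filter] at hp
    have hb : bb.2 = true := hp.2.2
    have := hxX.2.2
    rwa [hb] at this
  · intro x hxS'
    have hx : x ∈ Icc (0:ℝ) 1 := hS' hxS'
    rw [← hP.2.2] at hx
    rcases hx with ⟨A, hA, hxA⟩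
    by_cases hx' : x ∈ S
    · refine ⟨A ∩ cell S S' (true, true), ?_, hxA, hx', hxS'⟩
      rw [Finset.mem_coe, partsIn, Finset.mem_image]
      exact ⟨(A, (true, true)), by
        rw [Finset.mem_product, Finset.mem_filter]
        exact ⟨Finset.mem_coe.mp hA, Finset.mem_univ _, rfl⟩, rfl⟩
    · refine ⟨A ∩ cell S S' (false, true), ?_, hxA, hx', hxS'⟩
      rw [Finset.mem_coe, partsIn, Finset.mem_image]
      exact ⟨(A, (false, true)), by
        rw [Finset.mem_product, Finset.mem_filter]
        exact ⟨Finset.mem_coe.mp hA, Finset.mem_univ _, rfl⟩, rfl⟩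
lemma refines_refl (P : Finset (Set ℝ)) : Refines P P := fun A hA => ⟨A, hA, subset_rfl⟩

lemma refines_trans {P₁ P₂ P₃ : Finset (Set ℝ)} (h12 : Refines P₁ P₂) (h23 : Refines P₂ P₃) :
    Refines P₁ P₃ := by
  intro A hA
  rcases h12 A hA with ⟨B, hB, hAB⟩
  rcases h23 B hB with ⟨C, hC, hBC⟩
  exact ⟨C, hC, hAB.trans hBC⟩

section f
variable {f : ℝ×ℝ→ℝ} {M : ℝ}

lemma weak_reg (hM : 0 ≤ M) (hfm : Measurable f)
    (hfb : ∀ᵐ q ∂(volume : Measure (ℝ×ℝ)).restrict sq01, |f q| ≤ M)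
    {P₀ : Finset (Set ℝ)} (hP₀ : IsPart P₀) {ε' : ℝ} (hε' : 0 < ε') :
    ∃ P : Finset (Set ℝ), IsPart P ∧ Refines P P₀ ∧
      P.card ≤ P₀.card * 4 ^ (Nat.floor (M^2/(ε'^2/2)) + 1) ∧
      ∀ S S' : Set ℝ, MeasurableSet S → MeasurableSet S' →
        S ⊆ Icc (0:ℝ) 1 → S' ⊆ Icc (0:ℝ) 1 →
        |∫ q in S ×ˢ S', (f q - stepK f P q)| < ε' := by
  set η : ℝ := ε'^2/2 with hη
  have hηpos : 0 < η := by positivity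
  set N : ℕ := Nat.floor (M^2/η) + 1 with hN
  set E : ℕ → Set ℝ := fun n =>
    {x | ∃ P : Finset (Set ℝ), IsPart P ∧ Refines P P₀ ∧ P.card ≤ P₀.card * 4^n ∧ x = en f P}
    with hE
  have hne : ∀ n, (E n).Nonempty := fun n =>
    ⟨en f P₀, P₀, hP₀, refines_refl P₀,
      Nat.le_mul_of_pos_right _ (Nat.pow_pos (by norm_num)), rfl⟩
  have hbdd : ∀ n, BddAbove (E n) := by
    intro n
    refine ⟨M^2, ?_⟩
    rintro x ⟨P, hP, _, _, rfl⟩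
    exact en_le hM hfm hfb hP
  set e : ℕ → ℝ := fun n => sSup (E n) with he
  have hmono : ∀ n, e n ≤ e (n+1) := by
    intro n
    apply csSup_le_csSup (hbdd (n+1)) (hne n)
    rintro x ⟨P, hP, href, hcard, rfl⟩
    exact ⟨P, hP, href, hcard.trans (Nat.mul_le_mul_left _ (Nat.pow_le_pow_right (by norm_num)
      (Nat.le_succ n))), rfl⟩
  have heM : ∀ n, e n ≤ M^2 := fun n => csSup_le (hne n) (by
    rintro x ⟨P, hP, _, _, rfl⟩
    exact en_le hM hfm hfb hP)
  have he0 : ∀ n, 0 ≤ e n := fun n => by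
    rcases hne n with ⟨x, hx⟩
    rcases hx with ⟨P, hP, _, _, rfl⟩
    exact (en_nonneg P).trans (le_csSup (hbdd n) ⟨P, hP, by assumption, by assumption, rfl⟩)
  -- pigeonhole
  have hpigeon : ∃ n ≤ N, e (n+1) ≤ e n + η := by
    by_contra hc
    push_neg at hc
    have hstep : ∀ k : ℕ, k ≤ N + 1 → (k : ℝ) * η ≤ e k := by
      intro k
      induction k with
      | zero => intro _; simpa using he0 0
      | succ k ih =>
        intro hk
        have hk' : k ≤ N := Nat.lt_succ_iff.mp (Nat.lt_of_lt_of_le (Nat.lt_succ_self k) hk)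
        have h1 := hc k hk'
        have h2 := ih (hk'.trans (Nat.le_succ N))
        push_cast
        linarith
    have hfin := hstep (N+1) le_rfl
    have hgt : (M^2/η) < ((N : ℝ) + 1) := by
      have := Nat.lt_floor_add_one (M^2/η)
      rw [hN]
      push_cast
      linarith
    have : M^2 < ((N+1 : ℕ) : ℝ) * η := by
      rw [div_lt_iff₀ hηpos] at hgt
      push_cast
      push_cast at hgt
      linarith
    linarith [heM (N+1), hfin]
  rcases hpigeon with ⟨n, hnN, hen⟩
  have hlt : e n - η < e n := by linarith
  rcases exists_lt_of_lt_csSup (hne n) hlt with ⟨x, hxE, hxgt⟩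
  rcases hxE with ⟨P, hP, href, hcard, rfl⟩
  refine ⟨P, hP, href, hcard.trans (Nat.mul_le_mul_left _ (Nat.pow_le_pow_right (by norm_num)
    (by omega))), ?_⟩
  intro S S' hS hS' hSsub hS'sub
  set P₂ := refineBy P S S' with hP₂def
  have hP₂ : IsPart P₂ := refineBy_isPart hP hS hS'
  have href₂ : Refines P₂ P := refineBy_refines P S S'
  have hQ₁ := partsIn_sUnion_fst hP (S := S) (S' := S') hSsub
  have hQ₂ := partsIn_sUnion_snd hP (S := S) (S' := S') hS'sub
  have hinc := increment hfm hfb hP hP₂ href₂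
    (partsIn_subset P S S' true) (partsIn_subset P S S' false)
  rw [hQ₁, hQ₂] at hinc
  have hmem : en f P₂ ∈ E (n+1) := by
    refine ⟨P₂, hP₂, refines_trans href₂ href, ?_, rfl⟩
    calc P₂.card ≤ 4 * P.card := refineBy_card P S S'
      _ ≤ 4 * (P₀.card * 4^n) := Nat.mul_le_mul_left _ hcard
      _ = P₀.card * 4^(n+1) := by ring
  have hle : en f P₂ ≤ e (n+1) := le_csSup (hbdd (n+1)) hmem
  have hr2 : (∫ q in S ×ˢ S', (f q - stepK f P q))^2 < ε'^2 := by
    calc (∫ q in S ×ˢ S', (f q - stepK f P q))^2 ≤ en f P₂ - en f P := hinc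
      _ < e (n+1) - (e n - η) := by linarith
      _ ≤ (e n + η) - (e n - η) := by linarith
      _ = ε'^2 := by rw [hη]; ring
  nlinarith [sq_abs (∫ q in S ×ˢ S', (f q - stepK f P q)),
    abs_nonneg (∫ q in S ×ˢ S', (f q - stepK f P q))]

end f
noncomputable def stepU (u : ℝ → ℝ) (P : Finset (Set ℝ)) : ℝ → ℝ := fun x =>
  ∑ A ∈ P, A.indicator (fun _ => (∫ a in A, u a) / mA A) x

def Osc (δ : ℝ) (u : ℝ → ℝ) (P : Finset (Set ℝ)) : Prop :=
  ∀ A ∈ P, ∃ c : ℝ, ∀ᵐ x ∂volume.restrict A, u x ∈ Icc c (c + δ)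

lemma Osc_of_refines {δ : ℝ} {u : ℝ→ℝ} {P P' : Finset (Set ℝ)} (hosc : Osc δ u P)
    (hP' : ∀ A' ∈ P', ∃ A ∈ P, A' ⊆ A) : Osc δ u P' := by
  intro A' hA'
  rcases hP' A' hA' with ⟨A, hA, hsub⟩
  rcases hosc A hA with ⟨c, hc⟩
  exact ⟨c, ae_restrict_of_ae_restrict_of_subset hsub hc⟩

lemma restr_finite1 {T : Set ℝ} (hT : T ⊆ Icc (0:ℝ) 1) :
    IsFiniteMeasure (volume.restrict T) := by
  constructor
  rw [Measure.restrict_apply_univ]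
  calc volume T ≤ volume (Icc (0:ℝ) 1) := measure_mono hT
    _ = 1 := vol_Icc01
    _ < ⊤ := ENNReal.one_lt_top

lemma int1_of_bdd {h : ℝ→ℝ} (hm : Measurable h) {C : ℝ}
    (hb : ∀ᵐ x ∂volume.restrict (Icc (0:ℝ) 1), |h x| ≤ C)
    {T : Set ℝ} (hT : T ⊆ Icc (0:ℝ) 1) : IntegrableOn h T volume := by
  haveI := restr_finite1 hT
  refine Integrable.mono' (integrable_const C) hm.aestronglyMeasurable ?_
  simpa [Real.norm_eq_abs] using ae_restrict_of_ae_restrict_of_subset hT hb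

lemma stepU_meas {u : ℝ→ℝ} {P : Finset (Set ℝ)} (hP : ∀ A ∈ P, MeasurableSet A) :
    Measurable (stepU u P) :=
  Finset.measurable_sum _ fun A hA => measurable_const.indicator (hP A hA)

lemma stepU_bdd {u : ℝ→ℝ} {P : Finset (Set ℝ)} (x : ℝ) :
    |stepU u P x| ≤ ∑ A ∈ P, |(∫ a in A, u a) / mA A| := by
  refine (Finset.abs_sum_le_sum_abs _ _).trans (Finset.sum_le_sum fun A _ => ?_)
  rw [Set.indicator]
  split
  · exact le_rfl
  · simp [abs_nonneg]

lemma stepU_collapse {u : ℝ→ℝ} {P : Finset (Set ℝ)} (hP : IsPart P) {A} (hA : A ∈ P)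
    {x : ℝ} (hx : x ∈ A) : stepU u P x = (∫ a in A, u a) / mA A := by
  rw [stepU, Finset.sum_eq_single A]
  · rw [Set.indicator_of_mem hx]
  · intro B hB hne
    have hx' : x ∉ B := fun hxB => (hP.2.1 hB hA hne).le_bot ⟨hxB, hx⟩
    rw [Set.indicator_of_notMem hx']
  · exact fun h => absurd hA h

lemma stepU_L1 {u : ℝ→ℝ} (hum : Measurable u) {C : ℝ}
    (hub : ∀ᵐ x ∂volume.restrict (Icc (0:ℝ) 1), |u x| ≤ C)
    {P : Finset (Set ℝ)} (hP : IsPart P) {δ : ℝ} (hδ : 0 ≤ δ) (hosc : Osc δ u P) :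
    ∫ x in Icc (0:ℝ) 1, |u x - stepU u P x| ≤ δ := by
  have hu : IntegrableOn u (Icc (0:ℝ) 1) volume := int1_of_bdd hum hub subset_rfl
  have hs : IntegrableOn (stepU u P) (Icc (0:ℝ) 1) volume :=
    int1_of_bdd (stepU_meas hP.1) (Filter.Eventually.of_forall fun x => stepU_bdd x) subset_rfl
  have hd : IntegrableOn (fun x => |u x - stepU u P x|) (Icc (0:ℝ) 1) volume := (hu.sub hs).abs
  have hcover : Icc (0:ℝ) 1 = ⋃ A ∈ P, (A : Set ℝ) := by
    rw [← hP.2.2, IsPart.sUnion_biUnion]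
  have hsplit : ∫ x in Icc (0:ℝ) 1, |u x - stepU u P x|
      = ∑ A ∈ P, ∫ x in A, |u x - stepU u P x| := by
    rw [hcover]
    exact integral_biUnion_finset P (fun A hA => hP.1 A hA) hP.2.1
      (fun A hA => (hd.mono_set (by
        rw [hcover]
        exact Set.subset_biUnion_of_mem (u := fun A : Set ℝ => A) hA)))
  rw [hsplit]
  have hbound : ∀ A ∈ P, ∫ x in A, |u x - stepU u P x| ≤ δ * mA A := by
    intro A hA
    have hAsub := hP.subset hA
    have hAmeas := hP.1 A hA
    have huA : IntegrableOn u A volume := int1_of_bdd hum hub hAsub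
    haveI : IsFiniteMeasure (volume.restrict A) := restr_finite1 hAsub
    have hcong : ∫ x in A, |u x - stepU u P x|
        = ∫ x in A, |u x - (∫ a in A, u a) / mA A| := by
      refine setIntegral_congr_fun hAmeas fun x hx => ?_
      rw [stepU_collapse hP hA hx]
    rw [hcong]
    by_cases h0 : volume A = 0
    · rw [Measure.restrict_eq_zero.mpr h0, integral_zero_measure]
      have : mA A = 0 := by rw [mA, h0, ENNReal.toReal_zero]
      rw [this, mul_zero]
    · have hpos : 0 < mA A := by
        rw [mA]
        apply ENNReal.toReal_pos h0 (vol_ne_top hAsub)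
      rcases hosc A hA with ⟨c, hc⟩
      have havg : (∫ a in A, u a) / mA A ∈ Icc c (c + δ) := by
        constructor
        · rw [le_div_iff₀ hpos]
          have : ∫ _a in A, c ≤ ∫ a in A, u a := by
            refine integral_mono_ae (integrable_const c) huA ?_
            exact hc.mono fun x hx => hx.1
          rw [setIntegral_const, smul_eq_mul] at this
          calc c * mA A = mA A * c := mul_comm _ _
            _ ≤ ∫ a in A, u a := this
        · rw [div_le_iff₀ hpos]
          have : ∫ a in A, u a ≤ ∫ _a in A, (c + δ) := by
            refine integral_mono_ae huA (integrable_const _) ?_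
            exact hc.mono fun x hx => hx.2
          rw [setIntegral_const, smul_eq_mul] at this
          calc ∫ a in A, u a ≤ mA A * (c + δ) := this
            _ = (c + δ) * mA A := mul_comm _ _
      have hptw : ∀ᵐ x ∂volume.restrict A, |u x - (∫ a in A, u a) / mA A| ≤ δ := by
        refine hc.mono fun x hx => ?_
        rw [abs_le]
        constructor
        · have := hx.1
          have := havg.2
          linarith
        · have := hx.2
          have := havg.1
          linarith
      have := integral_mono_ae ((huA.sub (integrable_const _)).abs) (integrable_const δ) hptw
      rw [setIntegral_const, smul_eq_mul] at this
      calc ∫ x in A, |u x - (∫ a in A, u a) / mA A| ≤ mA A * δ := this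
        _ = δ * mA A := mul_comm _ _
  calc ∑ A ∈ P, ∫ x in A, |u x - stepU u P x| ≤ ∑ A ∈ P, δ * mA A :=
      Finset.sum_le_sum hbound
    _ = δ * ∑ A ∈ P, mA A := by rw [Finset.mul_sum]
    _ = δ := by rw [hP.sum_mA, mul_one]
noncomputable def lcell (u v : ℝ→ℝ) (δ : ℝ) (p : ℕ × ℕ) : Set ℝ :=
  (Icc (0:ℝ) 1 ∩ u⁻¹' (Ico ((p.1 : ℝ) * δ) (((p.1 : ℝ)+1) * δ))) ∩
    v⁻¹' (Ico ((p.2 : ℝ) * δ) (((p.2 : ℝ)+1) * δ))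

lemma Ico_delta_disj {δ : ℝ} (hδ : 0 < δ) {i j : ℕ} (h : i ≠ j) :
    Disjoint (Ico ((i:ℝ)*δ) (((i:ℝ)+1)*δ)) (Ico ((j:ℝ)*δ) (((j:ℝ)+1)*δ)) := by
  rw [Set.Ico_disjoint_Ico]
  rcases h.lt_or_gt with h | h
  · have h' : ((i:ℝ)+1) ≤ (j:ℝ) := by exact_mod_cast h
    calc min (((i:ℝ)+1)*δ) (((j:ℝ)+1)*δ) ≤ ((i:ℝ)+1)*δ := min_le_left _ _
      _ ≤ (j:ℝ)*δ := mul_le_mul_of_nonneg_right h' hδ.le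
      _ ≤ max ((i:ℝ)*δ) ((j:ℝ)*δ) := le_max_right _ _
  · have h' : ((j:ℝ)+1) ≤ (i:ℝ) := by exact_mod_cast h
    calc min (((i:ℝ)+1)*δ) (((j:ℝ)+1)*δ) ≤ ((j:ℝ)+1)*δ := min_le_right _ _
      _ ≤ (i:ℝ)*δ := mul_le_mul_of_nonneg_right h' hδ.le
      _ ≤ max ((i:ℝ)*δ) ((j:ℝ)*δ) := le_max_left _ _

lemma lcell_disj {u v : ℝ→ℝ} {δ : ℝ} (hδ : 0 < δ) {p q : ℕ × ℕ} (h : p ≠ q) :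
    Disjoint (lcell u v δ p) (lcell u v δ q) := by
  have hpq : p.1 ≠ q.1 ∨ p.2 ≠ q.2 := by
    by_contra hc
    push_neg at hc
    exact h (Prod.ext hc.1 hc.2)
  rcases hpq with h1 | h1
  · refine Disjoint.mono (inter_subset_left.trans inter_subset_right)
      (inter_subset_left.trans inter_subset_right) ?_
    exact Disjoint.preimage u (Ico_delta_disj hδ h1)
  · exact Disjoint.mono inter_subset_right inter_subset_right
      (Disjoint.preimage v (Ico_delta_disj hδ h1))

lemma exists_P₀ {u v : ℝ→ℝ} (hum : Measurable u) (hvm : Measurable v) {Bu Bv δ : ℝ}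
    (hδ : 0 < δ)
    (hu : ∀ᵐ x ∂volume.restrict (Icc (0:ℝ) 1), u x ∈ Icc 0 Bu)
    (hv : ∀ᵐ x ∂volume.restrict (Icc (0:ℝ) 1), v x ∈ Icc 0 Bv) :
    ∃ P₀ : Finset (Set ℝ), IsPart P₀ ∧
      P₀.card ≤ (Nat.floor (Bu/δ) + 1) * (Nat.floor (Bv/δ) + 1) + 1 ∧
      Osc δ u P₀ ∧ Osc δ v P₀ := by
  set Nu := Nat.floor (Bu/δ) + 1 with hNu
  set Nv := Nat.floor (Bv/δ) + 1 with hNv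
  set idx : Finset (ℕ × ℕ) := Finset.range Nu ×ˢ Finset.range Nv with hidx
  set good : Set ℝ := ⋃ p ∈ idx, lcell u v δ p with hgood
  set bad : Set ℝ := Icc (0:ℝ) 1 \ good with hbad
  have hcellmeas : ∀ p : ℕ × ℕ, MeasurableSet (lcell u v δ p) := fun p =>
    (measurableSet_Icc.inter (hum measurableSet_Ico)).inter (hvm measurableSet_Ico)
  have hgoodmeas : MeasurableSet good := Finset.measurableSet_biUnion idx fun p _ => hcellmeas p
  have hbadmeas : MeasurableSet bad := measurableSet_Icc.diff hgoodmeas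
  have hcellsub : ∀ p, lcell u v δ p ⊆ Icc (0:ℝ) 1 := fun p =>
    inter_subset_left.trans inter_subset_left
  have hmemcell : ∀ x ∈ Icc (0:ℝ) 1, u x ∈ Icc 0 Bu → v x ∈ Icc 0 Bv → x ∈ good := by
    intro x hx01 hux hvx
    set i := Nat.floor (u x / δ) with hi
    set j := Nat.floor (v x / δ) with hj
    have hiu : i < Nu := by
      rw [hNu, Nat.lt_succ_iff]
      exact Nat.floor_le_floor ((div_le_div_iff_of_pos_right hδ).mpr hux.2)
    have hjv : j < Nv := by
      rw [hNv, Nat.lt_succ_iff]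
      exact Nat.floor_le_floor ((div_le_div_iff_of_pos_right hδ).mpr hvx.2)
    have hu1 : (i : ℝ) * δ ≤ u x := by
      have h1 : (i:ℝ) ≤ u x / δ := Nat.floor_le (div_nonneg hux.1 hδ.le)
      calc (i:ℝ) * δ ≤ (u x / δ) * δ := mul_le_mul_of_nonneg_right h1 hδ.le
        _ = u x := div_mul_cancel₀ _ hδ.ne'
    have hu2 : u x < ((i:ℝ)+1) * δ := by
      have h1 : u x / δ < (i:ℝ)+1 := Nat.lt_floor_add_one _
      calc u x = (u x / δ) * δ := (div_mul_cancel₀ _ hδ.ne').symm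
        _ < ((i:ℝ)+1) * δ := mul_lt_mul_of_pos_right h1 hδ
    have hv1 : (j : ℝ) * δ ≤ v x := by
      have h1 : (j:ℝ) ≤ v x / δ := Nat.floor_le (div_nonneg hvx.1 hδ.le)
      calc (j:ℝ) * δ ≤ (v x / δ) * δ := mul_le_mul_of_nonneg_right h1 hδ.le
        _ = v x := div_mul_cancel₀ _ hδ.ne'
    have hv2 : v x < ((j:ℝ)+1) * δ := by
      have h1 : v x / δ < (j:ℝ)+1 := Nat.lt_floor_add_one _
      calc v x = (v x / δ) * δ := (div_mul_cancel₀ _ hδ.ne').symm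
        _ < ((j:ℝ)+1) * δ := mul_lt_mul_of_pos_right h1 hδ
    refine Set.mem_biUnion (?_ : (i, j) ∈ idx) ?_
    · exact Finset.mem_product.mpr ⟨Finset.mem_range.mpr hiu, Finset.mem_range.mpr hjv⟩
    · exact ⟨⟨hx01, ⟨hu1, hu2⟩⟩, ⟨hv1, hv2⟩⟩
  have hbadnull : volume bad = 0 := by
    have h1 : ∀ᵐ x ∂volume.restrict (Icc (0:ℝ) 1), x ∉ bad := by
      filter_upwards [hu, hv] with x hux hvx
      intro hxbad
      exact hxbad.2 (hmemcell x hxbad.1 hux hvx)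
    have h2 : (volume.restrict (Icc (0:ℝ) 1)) bad = 0 := by
      rw [ae_iff] at h1
      simpa using h1
    rw [Measure.restrict_apply hbadmeas] at h2
    rwa [Set.inter_eq_self_of_subset_left (diff_subset)] at h2
  have hcellgood : ∀ p ∈ idx, lcell u v δ p ⊆ good := fun p hp =>
    Set.subset_biUnion_of_mem (u := fun p => lcell u v δ p) hp
  refine ⟨idx.image (lcell u v δ) ∪ {bad}, ⟨?_, ?_, ?_⟩, ?_, ?_, ?_⟩
  · intro X hX
    rcases Finset.mem_union.mp hX with hX | hX
    · rcases Finset.mem_image.mp hX with ⟨p, _, rfl⟩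
      exact hcellmeas p
    · rw [Finset.mem_singleton.mp hX]
      exact hbadmeas
  · intro X hX Y hY hne
    rcases Finset.mem_union.mp (Finset.mem_coe.mp hX) with hX' | hX' <;>
      rcases Finset.mem_union.mp (Finset.mem_coe.mp hY) with hY' | hY'
    · rcases Finset.mem_image.mp hX' with ⟨p, _, rfl⟩
      rcases Finset.mem_image.mp hY' with ⟨q, _, rfl⟩
      have hpq : p ≠ q := fun h => hne (by rw [h])
      exact lcell_disj hδ hpq
    · rcases Finset.mem_image.mp hX' with ⟨p, hp, rfl⟩
      rw [Finset.mem_singleton.mp hY']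
      exact disjoint_sdiff_right.mono_left (hcellgood p hp)
    · rcases Finset.mem_image.mp hY' with ⟨p, hp, rfl⟩
      rw [Finset.mem_singleton.mp hX']
      exact (disjoint_sdiff_right.mono_left (hcellgood p hp)).symm
    · exact absurd ((Finset.mem_singleton.mp hX').trans
        (Finset.mem_singleton.mp hY').symm) hne
  · apply Set.Subset.antisymm
    · rintro x ⟨X, hX, hxX⟩
      rcases Finset.mem_union.mp (Finset.mem_coe.mp hX) with hX' | hX'
      · rcases Finset.mem_image.mp hX' with ⟨p, _, rfl⟩
        exact hcellsub p hxX
      · rw [Finset.mem_singleton.mp hX'] at hxX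
        exact hxX.1
    · intro x hx01
      by_cases hxg : x ∈ good
      · rcases Set.mem_iUnion₂.mp hxg with ⟨p, hp, hxp⟩
        exact ⟨lcell u v δ p, Finset.mem_coe.mpr (Finset.mem_union.mpr
          (Or.inl (Finset.mem_image.mpr ⟨p, hp, rfl⟩))), hxp⟩
      · exact ⟨bad, Finset.mem_coe.mpr (Finset.mem_union.mpr
          (Or.inr (Finset.mem_singleton.mpr rfl))), hx01, hxg⟩
  · calc (idx.image (lcell u v δ) ∪ {bad}).card
        ≤ (idx.image (lcell u v δ)).card + ({bad} : Finset (Set ℝ)).card :=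
          Finset.card_union_le _ _
      _ ≤ idx.card + 1 := by
          rw [Finset.card_singleton]
          exact Nat.add_le_add_right Finset.card_image_le 1
      _ = Nu * Nv + 1 := by rw [hidx, Finset.card_product, Finset.card_range, Finset.card_range]
  · intro X hX
    rcases Finset.mem_union.mp hX with hX' | hX'
    · rcases Finset.mem_image.mp hX' with ⟨p, _, rfl⟩
      refine ⟨(p.1 : ℝ) * δ, (ae_restrict_mem (hcellmeas p)).mono fun x hx => ?_⟩
      refine ⟨hx.1.2.1, ?_⟩
      have h2 := hx.1.2.2.le
      have : ((p.1:ℝ)+1) * δ = (p.1:ℝ)*δ + δ := by ring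
      linarith [this ▸ h2]
    · rw [Finset.mem_singleton.mp hX']
      refine ⟨0, ?_⟩
      rw [Measure.restrict_eq_zero.mpr hbadnull]
      simp
  · intro X hX
    rcases Finset.mem_union.mp hX with hX' | hX'
    · rcases Finset.mem_image.mp hX' with ⟨p, _, rfl⟩
      refine ⟨(p.2 : ℝ) * δ, (ae_restrict_mem (hcellmeas p)).mono fun x hx => ?_⟩
      refine ⟨hx.2.1, ?_⟩
      have h2 := hx.2.2.le
      have : ((p.2:ℝ)+1) * δ = (p.2:ℝ)*δ + δ := by ring
      linarith [this ▸ h2]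
    · rw [Finset.mem_singleton.mp hX']
      refine ⟨0, ?_⟩
      rw [Measure.restrict_eq_zero.mpr hbadnull]
      simp
lemma union_null_ae {X E : Set ℝ} (hE : volume E = 0) : (X ∪ E : Set ℝ) =ᵐ[volume] X := by
  rw [ae_eq_set]
  constructor
  · exact measure_mono_null (by intro x hx; rcases hx.1 with h | h; exacts [absurd h hx.2, h]) hE
  · simp [Set.diff_eq_empty.mpr Set.subset_union_left]

lemma prune {P : Finset (Set ℝ)} (hP : IsPart P) :
    ∃ (K : ℕ) (base : Fin K → Set ℝ) (I : Fin K → Set ℝ) (E : Set ℝ),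
      0 < K ∧ K ≤ P.card ∧ MeasurableSet E ∧ volume E = 0 ∧
      (∀ k, base k ∈ P) ∧ Function.Injective base ∧
      (∀ k, volume (base k) ≠ 0) ∧
      (∀ A ∈ P, volume A ≠ 0 → ∃ k, base k = A) ∧
      (∀ A ∈ P, volume A = 0 → A ⊆ E) ∧
      (∀ k, MeasurableSet (I k)) ∧ (∀ k, 0 < volume (I k)) ∧
      Pairwise (Function.onFun Disjoint I) ∧ (⋃ k, I k) = Icc (0:ℝ) 1 ∧
      (∀ k, I k =ᵐ[volume] base k) ∧ (∀ k, volume (I k) = volume (base k)) ∧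
      (∀ k x, x ∉ E → (x ∈ I k ↔ x ∈ base k)) := by
  set nulls : Finset (Set ℝ) := P.filter (fun A => volume A = 0) with hnulls
  set pos : Finset (Set ℝ) := P.filter (fun A => volume A ≠ 0) with hpos
  set E : Set ℝ := ⋃ A ∈ nulls, A with hE
  have hEmeas : MeasurableSet E :=
    Finset.measurableSet_biUnion nulls fun A hA => hP.1 A (Finset.mem_filter.mp hA).1
  have hE0 : volume E = 0 := by
    refine le_antisymm ?_ (by simp)
    calc volume E ≤ ∑ A ∈ nulls, volume A := measure_biUnion_finset_le nulls id
      _ = 0 := Finset.sum_eq_zero fun A hA => (Finset.mem_filter.mp hA).2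
  have hK : 0 < pos.card := by
    rw [Finset.card_pos]
    by_contra hne
    rw [Finset.not_nonempty_iff_eq_empty] at hne
    have hall : ∀ A ∈ P, volume A = 0 := by
      intro A hA
      by_contra h
      exact Finset.notMem_empty A (hne ▸ Finset.mem_filter.mpr ⟨hA, h⟩)
    have hsub : Icc (0:ℝ) 1 ⊆ E := by
      rw [← hP.2.2]
      rintro x ⟨A, hA, hxA⟩
      exact Set.mem_biUnion (Finset.mem_filter.mpr ⟨Finset.mem_coe.mp hA, hall A (Finset.mem_coe.mp hA)⟩) hxA
    have := measure_mono_null hsub hE0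
    rw [vol_Icc01] at this
    exact one_ne_zero this
  set K : ℕ := pos.card with hKdef
  set base : Fin K → Set ℝ := fun k => ((pos.equivFin.symm k : pos) : Set ℝ) with hbase
  have hbase_mem : ∀ k, base k ∈ pos := fun k => (pos.equivFin.symm k).2
  have hbase_inj : Function.Injective base := by
    intro k l h
    have : pos.equivFin.symm k = pos.equivFin.symm l := Subtype.ext h
    exact pos.equivFin.symm.injective this
  have hbase_P : ∀ k, base k ∈ P := fun k => (Finset.mem_filter.mp (hbase_mem k)).1
  have hbase_ne : ∀ k, volume (base k) ≠ 0 := fun k => (Finset.mem_filter.mp (hbase_mem k)).2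
  have hbase_surj : ∀ A ∈ P, volume A ≠ 0 → ∃ k, base k = A := by
    intro A hA h0
    refine ⟨pos.equivFin ⟨A, Finset.mem_filter.mpr ⟨hA, h0⟩⟩, ?_⟩
    simp only [hbase, Equiv.symm_apply_apply]
  have hnull_sub : ∀ A ∈ P, volume A = 0 → A ⊆ E := by
    intro A hA h0
    exact Set.subset_biUnion_of_mem (u := fun A : Set ℝ => A) (Finset.mem_filter.mpr ⟨hA, h0⟩)
  have hEdisj : ∀ k, Disjoint (base k) E := by
    intro k
    rw [Set.disjoint_iff_inter_eq_empty]
    ext x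
    simp only [Set.mem_inter_iff, Set.mem_empty_iff_false, iff_false, not_and]
    intro hxb hxE
    rcases Set.mem_iUnion₂.mp hxE with ⟨A, hA, hxA⟩
    have hAP := (Finset.mem_filter.mp hA).1
    have hA0 := (Finset.mem_filter.mp hA).2
    have hne : A ≠ base k := fun h => hbase_ne k (h ▸ hA0)
    exact (hP.2.1 (Finset.mem_coe.mpr hAP) (Finset.mem_coe.mpr (hbase_P k)) hne).le_bot ⟨hxA, hxb⟩
  set i₀ : Fin K := ⟨0, hK⟩ with hi₀
  set I : Fin K → Set ℝ := fun k => if k = i₀ then base k ∪ E else base k with hI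
  have hIk : ∀ k, I k = if k = i₀ then base k ∪ E else base k := fun k => rfl
  have hIae : ∀ k, I k =ᵐ[volume] base k := by
    intro k
    by_cases h : k = i₀
    · rw [hIk k, if_pos h]
      exact union_null_ae hE0
    · rw [hIk k, if_neg h]
      exact ae_eq_refl _
  have hIvol : ∀ k, volume (I k) = volume (base k) := by
    intro k
    exact measure_congr (hIae k)
  have hImem : ∀ k x, x ∉ E → (x ∈ I k ↔ x ∈ base k) := by
    intro k x hxE
    by_cases h : k = i₀
    · rw [hIk k, if_pos h, Set.mem_union]
      exact ⟨fun hh => hh.resolve_right hxE, Or.inl⟩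
    · rw [hIk k, if_neg h]
  refine ⟨K, base, I, E, hK, ?_, hEmeas, hE0, hbase_P, hbase_inj, hbase_ne, hbase_surj,
    hnull_sub, ?_, ?_, ?_, ?_, hIae, hIvol, hImem⟩
  · exact Finset.card_filter_le P _
  · intro k
    by_cases h : k = i₀
    · rw [hIk k, if_pos h]
      exact (hP.1 _ (hbase_P k)).union hEmeas
    · rw [hIk k, if_neg h]
      exact hP.1 _ (hbase_P k)
  · intro k
    rw [hIvol k]
    exact lt_of_le_of_ne (by simp) (Ne.symm (hbase_ne k))
  · intro k l hkl
    rw [Function.onFun, hIk k, hIk l]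
    have hbd : Disjoint (base k) (base l) := by
      refine hP.2.1 (Finset.mem_coe.mpr (hbase_P k)) (Finset.mem_coe.mpr (hbase_P l)) ?_
      exact fun h => hkl (hbase_inj h)
    by_cases hk : k = i₀ <;> by_cases hl : l = i₀
    · exact absurd (hk.trans hl.symm) hkl
    · rw [if_pos hk, if_neg hl]
      exact Disjoint.union_left hbd ((hEdisj l).symm)
    · rw [if_neg hk, if_pos hl]
      exact Disjoint.union_right hbd (hEdisj k)
    · rw [if_neg hk, if_neg hl]
      exact hbd
  · apply Set.Subset.antisymm
    · rintro x hx
      rcases Set.mem_iUnion.mp hx with ⟨k, hk⟩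
      rw [show x ∈ I k ↔ x ∈ (if k = i₀ then base k ∪ E else base k) from Iff.rfl] at hk
      by_cases h : k = i₀
      · rw [if_pos h] at hk
        rcases hk with hk | hk
        · exact hP.subset (hbase_P k) hk
        · rcases Set.mem_iUnion₂.mp hk with ⟨A, hA, hxA⟩
          exact hP.subset (Finset.mem_filter.mp hA).1 hxA
      · rw [if_neg h] at hk
        exact hP.subset (hbase_P k) hk
    · intro x hx
      rw [← hP.2.2] at hx
      rcases hx with ⟨A, hA, hxA⟩
      rw [Finset.mem_coe] at hA
      by_cases h0 : volume A = 0
      · refine Set.mem_iUnion.mpr ⟨i₀, ?_⟩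
        rw [hIk i₀, if_pos rfl]
        exact Or.inr (hnull_sub A hA h0 hxA)
      · rcases hbase_surj A hA h0 with ⟨k, rfl⟩
        refine Set.mem_iUnion.mpr ⟨k, ?_⟩
        rw [hIk k]
        by_cases h : k = i₀
        · rw [if_pos h]; exact Or.inl hxA
        · rw [if_neg h]; exact hxA
section collapse
variable {K : ℕ} {base I : Fin K → Set ℝ} {E : Set ℝ} {P : Finset (Set ℝ)}

lemma fin_collapse_U {u : ℝ→ℝ} (hP : IsPart P)
    (hbase_P : ∀ k, base k ∈ P) (hbase_inj : Function.Injective base)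
    (hbase_surj : ∀ A ∈ P, volume A ≠ 0 → ∃ k, base k = A)
    (hnull_sub : ∀ A ∈ P, volume A = 0 → A ⊆ E)
    (hIae : ∀ k, I k =ᵐ[volume] base k)
    (hImem : ∀ k x, x ∉ E → (x ∈ I k ↔ x ∈ base k))
    {x : ℝ} (hx : x ∉ E) :
    ∑ k : Fin K, (I k).indicator (fun _ => (∫ a in I k, u a) / (volume (I k)).toReal) x
      = stepU u P x := by
  have hterm : ∀ k : Fin K,
      (I k).indicator (fun _ => (∫ a in I k, u a) / (volume (I k)).toReal) x
      = (base k).indicator (fun _ => (∫ a in base k, u a) / mA (base k)) x := by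
    intro k
    have hvol : (volume (I k)).toReal = mA (base k) := by rw [mA, measure_congr (hIae k)]
    have hint : (∫ a in I k, u a) = ∫ a in base k, u a := setIntegral_congr_set (hIae k)
    rw [Set.indicator, Set.indicator]
    by_cases hxk : x ∈ I k
    · rw [if_pos hxk, if_pos ((hImem k x hx).mp hxk), hint, hvol]
    · rw [if_neg hxk, if_neg (fun h => hxk ((hImem k x hx).mpr h))]
  rw [Finset.sum_congr rfl (fun k _ => hterm k)]
  by_cases hxA : ∃ A ∈ P, x ∈ A
  · rcases hxA with ⟨A, hA, hxa⟩
    have h0 : volume A ≠ 0 := fun h0 => hx (hnull_sub A hA h0 hxa)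
    rcases hbase_surj A hA h0 with ⟨k₀, rfl⟩
    rw [stepU_collapse hP hA hxa]
    rw [Finset.sum_eq_single k₀]
    · rw [Set.indicator_of_mem hxa]
    · intro k _ hkne
      have hne : base k ≠ base k₀ := fun h => hkne (hbase_inj h)
      have hx' : x ∉ base k := fun h =>
        (hP.2.1 (Finset.mem_coe.mpr (hbase_P k)) (Finset.mem_coe.mpr (hbase_P k₀)) hne).le_bot
          ⟨h, hxa⟩
      rw [Set.indicator_of_notMem hx']
    · intro hk
      exact absurd (Finset.mem_univ k₀) hk
  · push_neg at hxA
    have h1 : ∑ k : Fin K, (base k).indicator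
        (fun _ => (∫ a in base k, u a) / mA (base k)) x = 0 :=
      Finset.sum_eq_zero fun k _ => Set.indicator_of_notMem (fun h => hxA (base k) (hbase_P k) h) _
    have h2 : stepU u P x = 0 :=
      Finset.sum_eq_zero fun A hA => Set.indicator_of_notMem (hxA A hA) _
    rw [h1, h2]

lemma fin_collapse_W {W : ℝ→ℝ→ℝ} {M : ℝ} (hfm : Measurable (Function.uncurry W))
    (hfb : ∀ᵐ q ∂(volume : Measure (ℝ×ℝ)).restrict sq01, |Function.uncurry W q| ≤ M)
    (hP : IsPart P)
    (hbase_P : ∀ k, base k ∈ P) (hbase_inj : Function.Injective base)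
    (hbase_surj : ∀ A ∈ P, volume A ≠ 0 → ∃ k, base k = A)
    (hnull_sub : ∀ A ∈ P, volume A = 0 → A ⊆ E)
    (hIae : ∀ k, I k =ᵐ[volume] base k)
    (hImem : ∀ k x, x ∉ E → (x ∈ I k ↔ x ∈ base k))
    {x y : ℝ} (hx : x ∉ E) (hy : y ∉ E) :
    ∑ k : Fin K, ∑ l : Fin K, (I k).indicator 1 x * (I l).indicator 1 y *
        ((∫ a in I k, ∫ b in I l, W a b) / ((volume (I k)).toReal * (volume (I l)).toReal))
      = stepK (Function.uncurry W) P (x, y) := by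
  set f : ℝ×ℝ→ℝ := Function.uncurry W with hfdef
  have hind : ∀ (k : Fin K) (z : ℝ), z ∉ E →
      (I k).indicator (1 : ℝ → ℝ) z = (base k).indicator 1 z := by
    intro k z hz
    rw [Set.indicator, Set.indicator]
    by_cases hzk : z ∈ I k
    · rw [if_pos hzk, if_pos ((hImem k z hz).mp hzk)]
    · rw [if_neg hzk, if_neg (fun h => hzk ((hImem k z hz).mpr h))]
  have havg : ∀ k l : Fin K,
      (∫ a in I k, ∫ b in I l, W a b) / ((volume (I k)).toReal * (volume (I l)).toReal)
      = avgK f (base k) (base l) := by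
    intro k l
    have hvolk : (volume (I k)).toReal = mA (base k) := by rw [mA, measure_congr (hIae k)]
    have hvoll : (volume (I l)).toReal = mA (base l) := by rw [mA, measure_congr (hIae l)]
    have hinner : (fun a => ∫ b in I l, W a b) = fun a => ∫ b in base l, W a b :=
      funext fun a => setIntegral_congr_set (hIae l)
    have hint : (∫ a in I k, ∫ b in I l, W a b) = ∫ a in base k, ∫ b in base l, W a b := by
      rw [hinner]
      exact setIntegral_congr_set (hIae k)
    have hiter : (∫ a in base k, ∫ b in base l, W a b) = cInt f (base k) (base l) := by
      rw [show (∫ a in base k, ∫ b in base l, W a b) = ∫ a in base k, ∫ b in base l, f (a, b)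
        from rfl]
      exact iter_eq (hP.1 _ (hbase_P k)) (hP.1 _ (hbase_P l))
        (hf_int hfm hfb (hP.subset (hbase_P k)) (hP.subset (hbase_P l)))
    rw [hint, hiter, hvolk, hvoll, avgK]
  have hterm : ∀ k l : Fin K,
      (I k).indicator 1 x * (I l).indicator 1 y *
        ((∫ a in I k, ∫ b in I l, W a b) / ((volume (I k)).toReal * (volume (I l)).toReal))
      = (base k).indicator 1 x * (base l).indicator 1 y * avgK f (base k) (base l) := by
    intro k l
    rw [hind k x hx, hind l y hy, havg k l]
  rw [Finset.sum_congr rfl fun k _ => Finset.sum_congr rfl fun l _ => hterm k l]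
  by_cases hxA : ∃ A ∈ P, x ∈ A
  · rcases hxA with ⟨A, hA, hxa⟩
    have h0A : volume A ≠ 0 := fun h0 => hx (hnull_sub A hA h0 hxa)
    rcases hbase_surj A hA h0A with ⟨k₀, rfl⟩
    by_cases hyB : ∃ B ∈ P, y ∈ B
    · rcases hyB with ⟨B, hB, hyb⟩
      have h0B : volume B ≠ 0 := fun h0 => hy (hnull_sub B hB h0 hyb)
      rcases hbase_surj B hB h0B with ⟨l₀, rfl⟩
      rw [stepK_collapse hP hA hB hxa hyb]
      rw [Finset.sum_eq_single k₀]
      · rw [Finset.sum_eq_single l₀]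
        · rw [Set.indicator_of_mem hxa, Set.indicator_of_mem hyb]
          simp
        · intro l _ hlne
          have hne : base l ≠ base l₀ := fun h => hlne (hbase_inj h)
          have hy' : y ∉ base l := fun h =>
            (hP.2.1 (Finset.mem_coe.mpr (hbase_P l)) (Finset.mem_coe.mpr (hbase_P l₀)) hne).le_bot
              ⟨h, hyb⟩
          rw [Set.indicator_of_notMem hy']
          ring
        · intro hl
          exact absurd (Finset.mem_univ l₀) hl
      · intro k _ hkne
        have hne : base k ≠ base k₀ := fun h => hkne (hbase_inj h)
        have hx' : x ∉ base k := fun h =>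
          (hP.2.1 (Finset.mem_coe.mpr (hbase_P k)) (Finset.mem_coe.mpr (hbase_P k₀)) hne).le_bot
            ⟨h, hxa⟩
        exact Finset.sum_eq_zero fun l _ => by
          rw [Set.indicator_of_notMem hx']
          ring
      · intro hk
        exact absurd (Finset.mem_univ k₀) hk
    · push_neg at hyB
      have h1 : ∀ k : Fin K, ∑ l : Fin K, (base k).indicator 1 x * (base l).indicator 1 y *
          avgK f (base k) (base l) = 0 := fun k =>
        Finset.sum_eq_zero fun l _ => by
          rw [Set.indicator_of_notMem (fun h => hyB (base l) (hbase_P l) h)]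
          ring
      have h2 : stepK f P (x, y) = 0 := by
        rw [stepK]
        exact Finset.sum_eq_zero fun A hA => Finset.sum_eq_zero fun B hB => by
          rw [Set.indicator_of_notMem (fun h => hyB B hB h)]
          ring
      rw [Finset.sum_congr rfl fun k _ => h1 k, h2, Finset.sum_const, smul_zero]
  · push_neg at hxA
    have h1 : ∀ k : Fin K, ∑ l : Fin K, (base k).indicator 1 x * (base l).indicator 1 y *
        avgK f (base k) (base l) = 0 := fun k =>
      Finset.sum_eq_zero fun l _ => by
        rw [Set.indicator_of_notMem (fun h => hxA (base k) (hbase_P k) h)]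
        ring
    have h2 : stepK f P (x, y) = 0 := by
      rw [stepK]
      exact Finset.sum_eq_zero fun A hA => Finset.sum_eq_zero fun B hB => by
        rw [Set.indicator_of_notMem (fun h => hxA A hA h)]
        ring
    rw [Finset.sum_congr rfl fun k _ => h1 k, h2, Finset.sum_const, smul_zero]

end collapse
end S16
/-- Szemerédi's weak regularity lemma for the parameter set `𝒫_{m,M}`
(Lemma `l:Szemeredi`): every triple `(W, u₀, γ)` can be `ε`-approximated in
`‖·‖_□ + L¹ + L¹` by the step-function averages over a measurable partition of
`[0,1]` into at most `K_max(ε)` positive-measure parts. -/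
theorem stmt_16 (m M : ℝ) (hm : 0 < m) (hm2 : m ≤ 1 / 2) (hmM : m ≤ M) :
    ∀ ε > (0 : ℝ), ∃ Kmax : ℕ,
      ∀ (W : ℝ → ℝ → ℝ) (u₀ γ : ℝ → ℝ),
        Measurable (Function.uncurry W) → Measurable u₀ → Measurable γ →
        (∀ᵐ q ∂(volume.restrict (Set.Icc (0 : ℝ) 1 ×ˢ Set.Icc (0 : ℝ) 1)),
          m ≤ W q.1 q.2 ∧ W q.1 q.2 = W q.2 q.1 ∧ W q.1 q.2 ≤ M) →
        (∀ᵐ x ∂(volume.restrict (Set.Icc (0 : ℝ) 1)), m ≤ u₀ x ∧ u₀ x ≤ 1 - m) →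
        (∀ᵐ x ∂(volume.restrict (Set.Icc (0 : ℝ) 1)), 0 ≤ γ x ∧ γ x ≤ M) →
        ∃ K : ℕ, 0 < K ∧ K ≤ Kmax ∧
          ∃ I : Fin K → Set ℝ,
            (∀ k, MeasurableSet (I k)) ∧ (∀ k, 0 < volume (I k)) ∧
            Pairwise (Function.onFun Disjoint I) ∧
            (⋃ k, I k) = Set.Icc (0 : ℝ) 1 ∧
            cutNorm (fun x y => W x y -
                ∑ k : Fin K, ∑ l : Fin K,
                  (I k).indicator 1 x * (I l).indicator 1 y *
                    ((∫ a in I k, ∫ b in I l, W a b) /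
                      ((volume (I k)).toReal * (volume (I l)).toReal))) +
              (∫ x in Set.Icc (0 : ℝ) 1, |u₀ x -
                ∑ k : Fin K, (I k).indicator
                  (fun _ => (∫ a in I k, u₀ a) / (volume (I k)).toReal) x|) +
              (∫ x in Set.Icc (0 : ℝ) 1, |γ x -
                ∑ k : Fin K, (I k).indicator
                  (fun _ => (∫ a in I k, γ a) / (volume (I k)).toReal) x|) < ε := by
  intro ε hε
  have hδ : 0 < ε/4 := by linarith
  have hM0 : 0 ≤ M := le_trans hm.le hmM
  refine ⟨((Nat.floor (1/(ε/4)) + 1) * (Nat.floor (M/(ε/4)) + 1) + 1) *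
    4 ^ (Nat.floor (M^2/((ε/4)^2/2)) + 1), ?_⟩
  intro W u₀ γ hWm hu₀m hγm hW hu₀ hγ
  set f : ℝ×ℝ → ℝ := Function.uncurry W with hfdef
  have hfm : Measurable f := hWm
  have hfb : ∀ᵐ q ∂(volume : Measure (ℝ×ℝ)).restrict S16.sq01, |f q| ≤ M := by
    refine hW.mono fun q hq => ?_
    have h1 := hq.1
    have h3 := hq.2.2
    have hfq : f q = W q.1 q.2 := rfl
    rw [abs_le, hfq]
    exact ⟨by linarith, h3⟩
  have hu01 : ∀ᵐ x ∂volume.restrict (Set.Icc (0:ℝ) 1), u₀ x ∈ Set.Icc (0:ℝ) 1 :=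
    hu₀.mono fun x hx => ⟨by linarith [hx.1], by linarith [hx.2]⟩
  have hγ0M : ∀ᵐ x ∂volume.restrict (Set.Icc (0:ℝ) 1), γ x ∈ Set.Icc (0:ℝ) M :=
    hγ.mono fun x hx => ⟨hx.1, hx.2⟩
  obtain ⟨P₀, hP₀, hP₀card, hosc_u, hosc_γ⟩ := S16.exists_P₀ hu₀m hγm hδ hu01 hγ0M
  obtain ⟨P, hP, href, hPcard, hPcut⟩ := S16.weak_reg hM0 hfm hfb hP₀ hδ
  have hosc_u' : S16.Osc (ε/4) u₀ P := S16.Osc_of_refines hosc_u href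
  have hosc_γ' : S16.Osc (ε/4) γ P := S16.Osc_of_refines hosc_γ href
  obtain ⟨K, base, I, E, hK, hKle, hEmeas, hE0, hbase_P, hbase_inj, hbase_ne, hbase_surj,
    hnull_sub, hImeas, hIpos, hIdisj, hIcover, hIae, hIvol, hImem⟩ := S16.prune hP
  have hEnm : ∀ᵐ x ∂(volume : Measure ℝ), x ∉ E := by
    rw [← measure_eq_zero_iff_ae_notMem]
    exact hE0
  refine ⟨K, hK, ?_, I, hImeas, hIpos, hIdisj, hIcover, ?_⟩
  · calc K ≤ P.card := hKle
      _ ≤ P₀.card * 4 ^ (Nat.floor (M^2/((ε/4)^2/2)) + 1) := hPcard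
      _ ≤ ((Nat.floor (1/(ε/4)) + 1) * (Nat.floor (M/(ε/4)) + 1) + 1) *
          4 ^ (Nat.floor (M^2/((ε/4)^2/2)) + 1) := Nat.mul_le_mul_right _ hP₀card
  -- the three error terms
  have hcut : cutNorm (fun x y => W x y -
      ∑ k : Fin K, ∑ l : Fin K,
        (I k).indicator 1 x * (I l).indicator 1 y *
          ((∫ a in I k, ∫ b in I l, W a b) /
            ((volume (I k)).toReal * (volume (I l)).toReal))) ≤ ε/4 := by
    apply Real.sSup_le _ hδ.le
    rintro r ⟨S, S', hS, hS', hSsub, hS'sub, rfl⟩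
    set g : ℝ×ℝ→ℝ := fun q => f q - S16.stepK f P q with hg
    have hgint : IntegrableOn g (S ×ˢ S') volume :=
      (S16.hf_int hfm hfb hSsub hS'sub).sub
        (S16.stepK_int hP.1 (Set.prod_mono hSsub hS'sub))
    have h1 : ∫ x in S, ∫ y in S', (W x y -
        ∑ k : Fin K, ∑ l : Fin K,
          (I k).indicator 1 x * (I l).indicator 1 y *
            ((∫ a in I k, ∫ b in I l, W a b) /
              ((volume (I k)).toReal * (volume (I l)).toReal)))
        = ∫ x in S, ∫ y in S', g (x, y) := by
      refine integral_congr_ae ((ae_restrict_of_ae hEnm).mono fun x hx => ?_)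
      refine integral_congr_ae ((ae_restrict_of_ae hEnm).mono fun y hy => ?_)
      beta_reduce
      rw [S16.fin_collapse_W hfm hfb hP hbase_P hbase_inj hbase_surj hnull_sub hIae hImem hx hy]
      rfl
    rw [h1, S16.iter_eq hS hS' hgint]
    exact (hPcut S S' hS hS' hSsub hS'sub).le
  have huL1 : ∫ x in Set.Icc (0:ℝ) 1, |u₀ x -
      ∑ k : Fin K, (I k).indicator
        (fun _ => (∫ a in I k, u₀ a) / (volume (I k)).toReal) x| ≤ ε/4 := by
    have heq : ∫ x in Set.Icc (0:ℝ) 1, |u₀ x -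
        ∑ k : Fin K, (I k).indicator
          (fun _ => (∫ a in I k, u₀ a) / (volume (I k)).toReal) x|
        = ∫ x in Set.Icc (0:ℝ) 1, |u₀ x - S16.stepU u₀ P x| := by
      refine integral_congr_ae ((ae_restrict_of_ae hEnm).mono fun x hx => ?_)
      beta_reduce
      rw [S16.fin_collapse_U hP hbase_P hbase_inj hbase_surj hnull_sub hIae hImem hx]
    rw [heq]
    refine S16.stepU_L1 hu₀m (C := 1) ?_ hP hδ.le hosc_u'
    exact hu01.mono fun x hx => abs_le.mpr ⟨by linarith [hx.1], hx.2⟩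
  have hγL1 : ∫ x in Set.Icc (0:ℝ) 1, |γ x -
      ∑ k : Fin K, (I k).indicator
        (fun _ => (∫ a in I k, γ a) / (volume (I k)).toReal) x| ≤ ε/4 := by
    have heq : ∫ x in Set.Icc (0:ℝ) 1, |γ x -
        ∑ k : Fin K, (I k).indicator
          (fun _ => (∫ a in I k, γ a) / (volume (I k)).toReal) x|
        = ∫ x in Set.Icc (0:ℝ) 1, |γ x - S16.stepU γ P x| := by
      refine integral_congr_ae ((ae_restrict_of_ae hEnm).mono fun x hx => ?_)
      beta_reduce
      rw [S16.fin_collapse_U hP hbase_P hbase_inj hbase_surj hnull_sub hIae hImem hx]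
    rw [heq]
    refine S16.stepU_L1 hγm (C := M) ?_ hP hδ.le hosc_γ'
    exact hγ0M.mono fun x hx => abs_le.mpr ⟨by linarith [hx.1, hM0], hx.2⟩
  linarith
end

section
/- Let 0 < m ≤ 1/2, m ≤ M, T₀ > 0, and let p = (W, z(0), γ, π) be SIS parameters with m ≤ w_{ij} = w_{ji} ≤ M, m ≤ z_i(0) ≤ 1−m, 0 ≤ γ_i ≤ M, π nonnegative with Σ_i π_i = 1, with trajectory z. Let 0 = t₀ < t₁ < ⋯ < t_J = T₀ be measurement points, let z* : [0,T₀] → ℝⁿ be piecewise constant with z*(t) = z*(t_i) for t ∈ [t_i, t_{i+1}), built from measurement values z*(t_i) ∈ ℝⁿ, and define the error terms Δ₁ := ‖z(0) − z*(0)‖_{2,π}, Δ₃ := max_{1 ≤ i ≤ J} (1/(t_i − t_{i−1}))·‖(z(t_i) − z(t_{i−1})) − (z*(t_i) − z*(t_{i−1}))‖_{2,π}, Δ₄ := max_{1 ≤ i ≤ J} (t_i − t_{i−1}). Then there is a constant C depending only on m, M, T₀ (not on n or J) such that for all t ∈ [0,T₀]: ‖z(t) − z*(t)‖_{2,π} ≤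 C·(Δ₁ + Δ₃ + Δ₄). -/
/-- The `π`-weighted `L²` norm `‖v‖_{2,π} = (Σ_i v_i² π_i)^{1/2}`. -/
noncomputable def pinorm2 {n : ℕ} (pv v : Fin n → ℝ) : ℝ :=
  Real.sqrt (∑ i, (v i) ^ 2 * pv i)

lemma pinorm2_nonneg {n : ℕ} (pv v : Fin n → ℝ) : 0 ≤ pinorm2 pv v :=
  Real.sqrt_nonneg _

lemma pinorm2_add_le {n : ℕ} (pv : Fin n → ℝ) (hpv : ∀ i, 0 ≤ pv i) (u v : Fin n → ℝ) :
    pinorm2 pv (fun i => u i + v i) ≤ pinorm2 pv u + pinorm2 pv v := by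
  have hA : 0 ≤ ∑ i, u i ^ 2 * pv i :=
    Finset.sum_nonneg fun i _ => mul_nonneg (sq_nonneg _) (hpv i)
  have hB : 0 ≤ ∑ i, v i ^ 2 * pv i :=
    Finset.sum_nonneg fun i _ => mul_nonneg (sq_nonneg _) (hpv i)
  set A := pinorm2 pv u with hAdef
  set B := pinorm2 pv v with hBdef
  have hAnn : 0 ≤ A := pinorm2_nonneg pv u
  have hBnn : 0 ≤ B := pinorm2_nonneg pv v
  have hA2 : A ^ 2 = ∑ i, u i ^ 2 * pv i := Real.sq_sqrt hA
  have hB2 : B ^ 2 = ∑ i, v i ^ 2 * pv i := Real.sq_sqrt hB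
  have hcs : ∑ i, u i * v i * pv i ≤ A * B := by
    have h := Real.sum_mul_le_sqrt_mul_sqrt Finset.univ
      (fun i => u i * Real.sqrt (pv i)) (fun i => v i * Real.sqrt (pv i))
    have e1 : ∑ i, (u i * Real.sqrt (pv i)) * (v i * Real.sqrt (pv i))
        = ∑ i, u i * v i * pv i := by
      apply Finset.sum_congr rfl
      intro i _
      have hsq := Real.mul_self_sqrt (hpv i)
      ring_nf
      ring_nf at hsq
      rw [mul_assoc, hsq]
      ring
    have e2 : ∑ i, (u i * Real.sqrt (pv i)) ^ 2 = ∑ i, u i ^ 2 * pv i := by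
      apply Finset.sum_congr rfl
      intro i _
      rw [mul_pow, Real.sq_sqrt (hpv i)]
    have e3 : ∑ i, (v i * Real.sqrt (pv i)) ^ 2 = ∑ i, v i ^ 2 * pv i := by
      apply Finset.sum_congr rfl
      intro i _
      rw [mul_pow, Real.sq_sqrt (hpv i)]
    rw [e1, e2, e3] at h
    rwa [hAdef, hBdef, pinorm2, pinorm2]
  rw [pinorm2, show A + B = Real.sqrt ((A + B) ^ 2) from (Real.sqrt_sq (by linarith)).symm]
  apply Real.sqrt_le_sqrt
  calc ∑ i, (u i + v i) ^ 2 * pv i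
      = ∑ i, (u i ^ 2 * pv i + 2 * (u i * v i * pv i) + v i ^ 2 * pv i) :=
        Finset.sum_congr rfl (fun i _ => by ring)
    _ = (∑ i, u i ^ 2 * pv i) + 2 * (∑ i, u i * v i * pv i) + ∑ i, v i ^ 2 * pv i := by
        rw [Finset.sum_add_distrib, Finset.sum_add_distrib, Finset.mul_sum]
    _ ≤ A ^ 2 + 2 * (A * B) + B ^ 2 := by rw [hA2, hB2]; linarith
    _ = (A + B) ^ 2 := by ring

lemma pinorm2_le_of_forall {n : ℕ} (pv v : Fin n → ℝ) (hpv : ∀ i, 0 ≤ pv i)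
    (hsum : ∑ i, pv i = 1) (c : ℝ) (hc : 0 ≤ c) (h : ∀ i, |v i| ≤ c) :
    pinorm2 pv v ≤ c := by
  rw [pinorm2, show c = Real.sqrt (c ^ 2) by rw [Real.sqrt_sq hc]]
  apply Real.sqrt_le_sqrt
  calc ∑ i, v i ^ 2 * pv i ≤ ∑ i, c ^ 2 * pv i := by
        apply Finset.sum_le_sum
        intro i _
        apply mul_le_mul_of_nonneg_right _ (hpv i)
        exact sq_le_sq' (abs_le.mp (h i)).1 (abs_le.mp (h i)).2
    _ = c ^ 2 := by rw [← Finset.mul_sum, hsum, mul_one]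

/-- Covering lemma: a point in `[tt 0, tt (last J))` lies in some `[tt i, tt i.succ)`. -/
lemma exists_mem_Ico {J : ℕ} (hJ : 0 < J) (tt : Fin (J + 1) → ℝ) (htt : StrictMono tt)
    (t : ℝ) (h0 : tt 0 ≤ t) (hlast : t < tt (Fin.last J)) :
    ∃ i : Fin J, tt i.castSucc ≤ t ∧ t < tt i.succ := by
  classical
  set S : Finset (Fin (J + 1)) := Finset.univ.filter (fun k => tt k ≤ t) with hS
  have hne : S.Nonempty := ⟨0, by simp [hS, h0]⟩
  set k := S.max' hne with hk
  have hkS : k ∈ S := S.max'_mem hne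
  have hkt : tt k ≤ t := by simpa [hS] using hkS
  have hklt : k ≠ Fin.last J := by
    intro h
    rw [h] at hkt
    linarith
  have hkval : (k : ℕ) < J := by
    rcases lt_or_eq_of_le (Nat.lt_succ_iff.mp k.isLt) with h | h
    · exact h
    · exact absurd (Fin.ext h : k = Fin.last J) hklt
  refine ⟨⟨(k : ℕ), hkval⟩, by simpa using hkt, ?_⟩
  by_contra hcon
  push_neg at hcon
  have hmem : (⟨(k : ℕ), hkval⟩ : Fin J).succ ∈ S := by
    rw [hS]
    simp only [Finset.mem_filter, Finset.mem_univ, true_and]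
    exact hcon
  have hle := S.le_max' _ hmem
  rw [← hk] at hle
  have : k < (⟨(k : ℕ), hkval⟩ : Fin J).succ := by
    apply Fin.lt_def.mpr
    simp
  exact absurd hle (not_le.mpr this)

/-- Discrete measurements (Lemma `l:ztpi2s`): with measurement points
`0 = t₀ < t₁ < ⋯ < t_J = T₀`, piecewise-constant measured curve `z*`, and error
terms `Δ₁, Δ₃, Δ₄`, there is a constant `C` depending only on `m, M, T₀` such that
`‖z(t) − z*(t)‖_{2,π} ≤ C (Δ₁ + Δ₃ + Δ₄)` for all `t ∈ [0,T₀]`. -/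
theorem stmt_18 (m M T₀ : ℝ) (hm : 0 < m) (hm2 : m ≤ 1 / 2) (hmM : m ≤ M)
    (hT₀ : 0 < T₀) :
    ∃ C : ℝ, ∀ (n J : ℕ), 0 < J →
      ∀ (W : Matrix (Fin n) (Fin n) ℝ) (pv γ : Fin n → ℝ)
        (z zs : ℝ → Fin n → ℝ) (tt : Fin (J + 1) → ℝ),
      W.IsSymm → (∀ i j, W i j ∈ Set.Icc m M) →
      (∀ i, z 0 i ∈ Set.Icc m (1 - m)) →
      (∀ i, γ i ∈ Set.Icc (0 : ℝ) M) →
      (∀ i, 0 ≤ pv i) → (∑ i, pv i = 1) →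
      (∀ i, ∀ t ∈ Set.Ici (0 : ℝ), HasDerivWithinAt (fun s => z s i)
        ((1 - z t i) * (∑ j, W i j * pv j * z t j) - γ i * z t i) (Set.Ici 0) t) →
      (∀ t ∈ Set.Ici (0 : ℝ), ∀ i, z t i ∈ Set.Icc (0 : ℝ) 1) →
      StrictMono tt → tt 0 = 0 → tt (Fin.last J) = T₀ →
      (∀ i : Fin J, ∀ s ∈ Set.Ico (tt i.castSucc) (tt i.succ),
        zs s = zs (tt i.castSucc)) →
      ∀ t ∈ Set.Icc (0 : ℝ) T₀,
        pinorm2 pv (fun j => z t j - zs t j) ≤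
          C * (pinorm2 pv (fun j => z 0 j - zs 0 j) +
            (⨆ i : Fin J, (1 / (tt i.succ - tt i.castSucc)) *
              pinorm2 pv (fun j =>
                (z (tt i.succ) j - z (tt i.castSucc) j) -
                (zs (tt i.succ) j - zs (tt i.castSucc) j))) +
            (⨆ i : Fin J, (tt i.succ - tt i.castSucc))) := by
  have hM : 0 < M := lt_of_lt_of_le hm hmM
  refine ⟨1 + T₀ + M, ?_⟩
  intro n J hJ W pv γ z zs tt hWsym hW hz0 hγ hpv hsum hderiv hzbox htt htt0 httJ hzs t ht
  haveI : Nonempty (Fin J) := ⟨⟨0, hJ⟩⟩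
  set Δ₁ := pinorm2 pv (fun j => z 0 j - zs 0 j) with hΔ₁def
  set Δ₃ := ⨆ i : Fin J, (1 / (tt i.succ - tt i.castSucc)) *
      pinorm2 pv (fun j => (z (tt i.succ) j - z (tt i.castSucc) j) -
        (zs (tt i.succ) j - zs (tt i.castSucc) j)) with hΔ₃def
  set Δ₄ := ⨆ i : Fin J, (tt i.succ - tt i.castSucc) with hΔ₄def
  -- basic facts
  have hdt : ∀ i : Fin J, 0 < tt i.succ - tt i.castSucc := fun i =>
    sub_pos.mpr (htt (Fin.castSucc_lt_succ : i.castSucc < i.succ))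
  have hbdd3 : BddAbove (Set.range fun i : Fin J =>
      (1 / (tt i.succ - tt i.castSucc)) *
      pinorm2 pv (fun j => (z (tt i.succ) j - z (tt i.castSucc) j) -
        (zs (tt i.succ) j - zs (tt i.castSucc) j))) :=
    (Set.finite_range _).bddAbove
  have hbdd4 : BddAbove (Set.range fun i : Fin J => (tt i.succ - tt i.castSucc)) :=
    (Set.finite_range _).bddAbove
  have hΔ₁nn : 0 ≤ Δ₁ := pinorm2_nonneg pv _
  have hΔ₃le : ∀ i : Fin J,
      pinorm2 pv (fun j => (z (tt i.succ) j - z (tt i.castSucc) j) -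
        (zs (tt i.succ) j - zs (tt i.castSucc) j)) ≤ Δ₃ * (tt i.succ - tt i.castSucc) := by
    intro i
    have h := le_ciSup hbdd3 i
    rw [← hΔ₃def] at h
    rw [one_div, inv_mul_eq_div, div_le_iff₀ (hdt i)] at h
    exact h
  have hΔ₃nn : 0 ≤ Δ₃ := by
    have h := hΔ₃le ⟨0, hJ⟩
    have h2 := pinorm2_nonneg pv (fun j =>
      (z (tt (⟨0, hJ⟩ : Fin J).succ) j - z (tt (⟨0, hJ⟩ : Fin J).castSucc) j) -
        (zs (tt (⟨0, hJ⟩ : Fin J).succ) j - zs (tt (⟨0, hJ⟩ : Fin J).castSucc) j))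
    nlinarith [hdt (⟨0, hJ⟩ : Fin J)]
  have hΔ₄le : ∀ i : Fin J, tt i.succ - tt i.castSucc ≤ Δ₄ := fun i => le_ciSup hbdd4 i
  have hΔ₄nn : 0 ≤ Δ₄ := le_trans (hdt ⟨0, hJ⟩).le (hΔ₄le ⟨0, hJ⟩)
  have httnn : ∀ k : Fin (J + 1), 0 ≤ tt k := by
    intro k
    rw [← htt0]
    exact htt.monotone (Fin.zero_le k)
  have httle : ∀ k : Fin (J + 1), tt k ≤ T₀ := by
    intro k
    rw [← httJ]
    exact htt.monotone (Fin.le_last k)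
  -- Lipschitz bound on z
  have hlip : ∀ j : Fin n, ∀ s u : ℝ, 0 ≤ s → 0 ≤ u → |z u j - z s j| ≤ M * |u - s| := by
    intro j s u hs hu
    have key := Convex.norm_image_sub_le_of_norm_hasDerivWithin_le
      (f := fun r => z r j)
      (f' := fun r => (1 - z r j) * (∑ l, W j l * pv l * z r l) - γ j * z r j)
      (C := M) (s := Set.Ici (0 : ℝ))
      (fun x hx => hderiv j x hx)
      (fun x hx => by
        show ‖(1 - z x j) * (∑ l, W j l * pv l * z x l) - γ j * z x j‖ ≤ M
        have hz := hzbox x hx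
        have hzj := hz j
        have hS0 : 0 ≤ ∑ l, W j l * pv l * z x l := by
          apply Finset.sum_nonneg
          intro l _
          exact mul_nonneg (mul_nonneg (hm.le.trans (hW j l).1) (hpv l)) (hz l).1
        have hSM : (∑ l, W j l * pv l * z x l) ≤ M := by
          calc (∑ l, W j l * pv l * z x l) ≤ ∑ l, M * pv l := by
                apply Finset.sum_le_sum
                intro l _
                calc W j l * pv l * z x l
                    ≤ W j l * pv l * 1 := by
                      apply mul_le_mul_of_nonneg_left (hz l).2
                      exact mul_nonneg (hm.le.trans (hW j l).1) (hpv l)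
                  _ = W j l * pv l := mul_one _
                  _ ≤ M * pv l := mul_le_mul_of_nonneg_right (hW j l).2 (hpv l)
            _ = M := by rw [← Finset.mul_sum, hsum, mul_one]
        have hγj := hγ j
        have hp1 : 0 ≤ (1 - z x j) * ∑ l, W j l * pv l * z x l :=
          mul_nonneg (by linarith [hzj.2]) hS0
        have hp2 : (1 - z x j) * (∑ l, W j l * pv l * z x l) ≤ M :=
          le_trans (mul_le_of_le_one_left hS0 (by linarith [hzj.1])) hSM
        have hp3 : 0 ≤ γ j * z x j := mul_nonneg hγj.1 hzj.1
        have hp4 : γ j * z x j ≤ M :=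
          le_trans (mul_le_of_le_one_right hγj.1 hzj.2) hγj.2
        rw [Real.norm_eq_abs]
        apply abs_le.mpr
        constructor <;> linarith)
      (convex_Ici 0) hs hu
    rw [Real.norm_eq_abs, Real.norm_eq_abs] at key
    exact key
  -- telescoping bound at measurement points
  have hB1 : ∀ k : Fin (J + 1),
      pinorm2 pv (fun j => z (tt k) j - zs (tt k) j) ≤ Δ₁ + Δ₃ * tt k := by
    intro k
    induction k using Fin.induction with
    | zero => rw [htt0]; simp [hΔ₁def]
    | succ i ih =>
      have heq : (fun j => z (tt i.succ) j - zs (tt i.succ) j)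
          = fun j => (z (tt i.castSucc) j - zs (tt i.castSucc) j) +
              ((z (tt i.succ) j - z (tt i.castSucc) j) -
                (zs (tt i.succ) j - zs (tt i.castSucc) j)) := by
        funext j; ring
      rw [heq]
      calc pinorm2 pv _ ≤ pinorm2 pv (fun j => z (tt i.castSucc) j - zs (tt i.castSucc) j) +
            pinorm2 pv (fun j => (z (tt i.succ) j - z (tt i.castSucc) j) -
              (zs (tt i.succ) j - zs (tt i.castSucc) j)) := pinorm2_add_le pv hpv _ _
        _ ≤ (Δ₁ + Δ₃ * tt i.castSucc) + Δ₃ * (tt i.succ - tt i.castSucc) :=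
            add_le_add ih (hΔ₃le i)
        _ = Δ₁ + Δ₃ * tt i.succ := by ring
  -- main case split
  rcases eq_or_lt_of_le ht.2 with heq | hlt
  · -- t = T₀
    have hzt : pinorm2 pv (fun j => z t j - zs t j) ≤ Δ₁ + Δ₃ * T₀ := by
      rw [heq, ← httJ]
      exact hB1 (Fin.last J)
    nlinarith [hzt, hΔ₁nn, hΔ₃nn, hΔ₄nn, hT₀, hM]
  · -- t < T₀, find the interval
    obtain ⟨i, hi1, hi2⟩ := exists_mem_Ico hJ tt htt t (by rw [htt0]; exact ht.1)
      (by rw [httJ]; exact hlt)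
    have hzst : zs t = zs (tt i.castSucc) := hzs i t ⟨hi1, hi2⟩
    have heq : (fun j => z t j - zs t j)
        = fun j => (z t j - z (tt i.castSucc) j) +
            (z (tt i.castSucc) j - zs (tt i.castSucc) j) := by
      funext j; rw [hzst]; ring
    have hd4 : t - tt i.castSucc ≤ Δ₄ :=
      le_trans (by linarith [hi2.le]) (hΔ₄le i)
    have hstep1 : pinorm2 pv (fun j => z t j - z (tt i.castSucc) j) ≤ M * Δ₄ := by
      apply pinorm2_le_of_forall pv _ hpv hsum _ (by positivity)
      intro j
      calc |z t j - z (tt i.castSucc) j| ≤ M * |t - tt i.castSucc| :=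
            hlip j (tt i.castSucc) t (httnn _) ht.1
        _ ≤ M * Δ₄ := by
            apply mul_le_mul_of_nonneg_left _ hM.le
            rw [abs_of_nonneg (by linarith)]
            exact hd4
    have hstep2 : pinorm2 pv (fun j => z (tt i.castSucc) j - zs (tt i.castSucc) j) ≤
        Δ₁ + Δ₃ * T₀ := by
      refine le_trans (hB1 i.castSucc) ?_
      have := httle i.castSucc
      nlinarith
    rw [heq]
    calc pinorm2 pv _ ≤ pinorm2 pv (fun j => z t j - z (tt i.castSucc) j) +
          pinorm2 pv (fun j => z (tt i.castSucc) j - zs (tt i.castSucc) j) :=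
          pinorm2_add_le pv hpv _ _
      _ ≤ M * Δ₄ + (Δ₁ + Δ₃ * T₀) := add_le_add hstep1 hstep2
      _ ≤ (1 + T₀ + M) * (Δ₁ + Δ₃ + Δ₄) := by nlinarith [hΔ₁nn, hΔ₃nn, hΔ₄nn]
end
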